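/- arXiv:1011.0355 — 9 statements merged into one kernel-verified Lean document; each statement's English description precedes it below -/
import Mathlib

section
/- For the heterogeneous Firework Process, let a_n = ∏_{i=0}^{n} P(R_{n−i} < (i+1)m) for n ∈ ℕ. If ∑_{n=0}^{∞} a_n < ∞, then P(V) > 0. -/
open MeasureTheory ProbabilityTheory Filter
open scoped ENNReal

set_option maxHeartbeats 1000000 in
/-- **Heterogeneous Firework Process.** With `a n = ∏_{i=0}^{n} P(R_{n-i} < (i+1)m)`,
if `∑_{n=0}^∞ a n < ∞` then `P(V) > 0`. -/
theorem firework_heterogeneous_survival_of_summable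
    {Ω : Type*} [MeasurableSpace Ω] (P : Measure Ω) [IsProbabilityMeasure P]
    (m : ℕ) (hm : 1 ≤ m)
    (u : ℕ → ℕ) (hu0 : u 0 = 0) (humono : StrictMono u)
    (hustep : ∀ n, u (n + 1) - u n ≤ m)
    (R : ℕ → Ω → ℝ)
    (hmeas : ∀ i, Measurable (R i))
    (hnonneg : ∀ i ω, 0 ≤ R i ω)
    (hindep : iIndepFun R P)
    (h0 : ∀ n, 0 < P {ω | R n ω < (m : ℝ)})
    (h1 : ∀ n, P {ω | R n ω < (m : ℝ)} < 1)
    (V : Set Ω)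
    (hV : V = ⋂ (n : ℕ) (_ : 1 ≤ n), ⋃ i ∈ Finset.range n,
      {ω | ((u n - u i : ℕ) : ℝ) ≤ R i ω})
    (a : ℕ → ℝ≥0∞)
    (ha : ∀ n, a n = ∏ i ∈ Finset.range (n + 1),
      P {ω | R (n - i) ω < (((i + 1) * m : ℕ) : ℝ)})
    (hsum : (∑' n : ℕ, a n) ≠ ⊤) :
    0 < P V := by
  classical
  -- Step bound: u n - u i ≤ (n - i) * m
  have hle : ∀ i n : ℕ, i ≤ n → u n - u i ≤ (n - i) * m := by
    intro i n h
    induction n with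
    | zero =>
      have : i = 0 := Nat.le_zero.mp h
      simp [this]
    | succ n ih =>
      rcases Nat.lt_or_ge i (n + 1) with hi | hi
      · have hi' : i ≤ n := Nat.lt_succ_iff.mp hi
        have hIH := ih hi'
        have h2 := hustep n
        have h3 : u i ≤ u n := humono.monotone hi'
        have h4 : u n ≤ u (n + 1) := humono.monotone (Nat.le_succ n)
        have h5 : (n + 1 - i) * m = (n - i) * m + m := by
          rw [show n + 1 - i = (n - i) + 1 by omega, Nat.succ_mul]
        rw [h5]
        set K := (n - i) * m with hK
        omega
      · have : i = n + 1 := le_antisymm h hi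
        simp [this]
  -- p + q = 1 for each coordinate
  have hcompl : ∀ i : ℕ, {ω : Ω | (m : ℝ) ≤ R i ω} = {ω : Ω | R i ω < (m : ℝ)}ᶜ := by
    intro i; ext ω; simp [not_lt]
  have hpq : ∀ i : ℕ, P {ω | R i ω < (m : ℝ)} + P {ω | (m : ℝ) ≤ R i ω} = 1 := by
    intro i
    rw [hcompl i]
    exact prob_add_prob_compl ((hmeas i) measurableSet_Iio)
  have hq0 : ∀ i : ℕ, P {ω | (m : ℝ) ≤ R i ω} ≠ 0 := by
    intro i h
    have h2 := hpq i
    rw [h, add_zero] at h2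
    have h3 := h1 i
    rw [h2] at h3
    exact lt_irrefl _ h3
  -- Choose N with small tail
  obtain ⟨N, hN⟩ : ∃ N : ℕ, (∑' k, a (k + N)) < 1 := by
    have ht := ENNReal.tendsto_sum_nat_add a hsum
    exact (ht.eventually (gt_mem_nhds zero_lt_one)).exists
  -- The conditioning event A
  set A : Set Ω := ⋂ i ∈ Finset.range N, {ω | (m : ℝ) ≤ R i ω} with hA
  have hPA : P A = ∏ i ∈ Finset.range N, P {ω | (m : ℝ) ≤ R i ω} := by
    exact hindep.meas_biInter (fun i _ => ⟨Set.Ici (m : ℝ), measurableSet_Ici, rfl⟩)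
  have hPA0 : P A ≠ 0 := by
    rw [hPA]
    exact Finset.prod_ne_zero_iff.mpr fun i _ => hq0 i
  have hPAtop : P A ≠ ⊤ := measure_ne_top _ _
  -- The death events
  set D : ℕ → Set Ω := fun n => ⋂ i ∈ Finset.range n, {ω | R i ω < ((u n - u i : ℕ) : ℝ)}
    with hD
  have hVc : Vᶜ ⊆ ⋃ k : ℕ, D (k + 1) := by
    intro ω hω
    simp only [hV, Set.mem_compl_iff, Set.mem_iInter, not_forall] at hω
    obtain ⟨n, hn1, hn⟩ := hω
    obtain ⟨k, rfl⟩ : ∃ k, n = k + 1 := ⟨n - 1, by omega⟩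
    refine Set.mem_iUnion.mpr ⟨k, ?_⟩
    simp only [hD, Set.mem_iInter]
    intro i hi
    simp only [Set.mem_iUnion, Set.mem_setOf_eq, not_exists, not_le] at hn
    exact hn i hi
  -- n ≤ N: A ∩ D n is empty
  have hzero : ∀ k : ℕ, k + 1 ≤ N → A ∩ D (k + 1) = ∅ := by
    intro k hk
    ext ω
    simp only [Set.mem_inter_iff, Set.mem_empty_iff_false, iff_false]
    rintro ⟨hωA, hωD⟩
    have h1' : (m : ℝ) ≤ R k ω :=
      Set.mem_iInter₂.mp hωA k (Finset.mem_range.mpr (by omega))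
    have h2' : R k ω < ((u (k + 1) - u k : ℕ) : ℝ) :=
      Set.mem_iInter₂.mp hωD k (Finset.mem_range.mpr (by omega))
    have h3' : ((u (k + 1) - u k : ℕ) : ℝ) ≤ (m : ℝ) := by
      exact_mod_cast Nat.cast_le.mpr (hustep k)
    linarith
  -- n > N: the main bound
  have hmain : ∀ k : ℕ, N ≤ k → P (A ∩ D (k + 1)) ≤ P A * a k := by
    intro k hk
    set c : ℕ → ℝ := fun i => (((k + 1 - i) * m : ℕ) : ℝ) with hc
    set B : ℕ → Set ℝ := fun i => if i < N then Set.Ico (m : ℝ) (c i) else Set.Iio (c i)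
      with hB
    have hsub : A ∩ D (k + 1) ⊆ ⋂ i ∈ Finset.range (k + 1), R i ⁻¹' B i := by
      rintro ω ⟨hωA, hωD⟩
      refine Set.mem_iInter₂.mpr fun i hi => ?_
      have hik : i < k + 1 := Finset.mem_range.mp hi
      have hRlt : R i ω < c i := by
        have h2' := Set.mem_iInter₂.mp hωD i hi
        have h3' : ((u (k + 1) - u i : ℕ) : ℝ) ≤ c i :=
          Nat.cast_le.mpr (hle i (k + 1) (by omega))
        exact lt_of_lt_of_le h2' h3'
      by_cases hiN : i < N
      · have hge : (m : ℝ) ≤ R i ω :=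
          Set.mem_iInter₂.mp hωA i (Finset.mem_range.mpr hiN)
        simp only [hB, Set.mem_preimage, if_pos hiN]
        exact ⟨hge, hRlt⟩
      · simp only [hB, Set.mem_preimage, if_neg hiN]
        exact hRlt
    have hprod : P (⋂ i ∈ Finset.range (k + 1), R i ⁻¹' B i)
        = ∏ i ∈ Finset.range (k + 1), P (R i ⁻¹' B i) := by
      refine hindep.meas_biInter fun i _ => ⟨B i, ?_, rfl⟩
      by_cases hiN : i < N <;> simp [hB, hiN, measurableSet_Ico, measurableSet_Iio]
    have hterm : ∀ i ∈ Finset.range (k + 1),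
        P (R i ⁻¹' B i) ≤ (if i < N then P {ω | (m : ℝ) ≤ R i ω} else 1)
          * P {ω | R i ω < c i} := by
      intro i hi
      have hpre2 : R i ⁻¹' Set.Iio (c i) = {ω | R i ω < c i} := rfl
      by_cases hiN : i < N
      · have hmc : (m : ℝ) ≤ c i := by
          have h' : (m : ℕ) ≤ (k + 1 - i) * m := Nat.le_mul_of_pos_left m (by omega)
          simp only [hc]
          exact Nat.cast_le.mpr h'
        have hdisj : Disjoint (R i ⁻¹' Set.Ico (m : ℝ) (c i)) (R i ⁻¹' Set.Iio (m : ℝ)) :=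
          Set.disjoint_left.mpr fun x hx1 hx2 => absurd hx1.1 (not_le.mpr hx2)
        have hunion : R i ⁻¹' Set.Ico (m : ℝ) (c i) ∪ R i ⁻¹' Set.Iio (m : ℝ)
            = R i ⁻¹' Set.Iio (c i) := by
          have hset : Set.Ico (m : ℝ) (c i) ∪ Set.Iio (m : ℝ) = Set.Iio (c i) := by
            rw [Set.union_comm]
            exact Set.Iio_union_Ico_eq_Iio hmc
          rw [← Set.preimage_union, hset]
        have hadd : P (R i ⁻¹' Set.Ico (m : ℝ) (c i)) + P {ω | R i ω < (m : ℝ)}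
            = P {ω | R i ω < c i} := by
          rw [← hpre2, ← hunion]
          exact (measure_union hdisj ((hmeas i) measurableSet_Iio)).symm
        have hx1 : P {ω | R i ω < c i} ≤ 1 := prob_le_one
        have hkey : P {ω | R i ω < c i} ≤ P {ω | R i ω < (m : ℝ)}
            + P {ω | (m : ℝ) ≤ R i ω} * P {ω | R i ω < c i} := by
          calc P {ω | R i ω < c i} = 1 * P {ω | R i ω < c i} := (one_mul _).symm
          _ = (P {ω | R i ω < (m : ℝ)} + P {ω | (m : ℝ) ≤ R i ω})
                * P {ω | R i ω < c i} := by rw [hpq i]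
          _ = P {ω | R i ω < (m : ℝ)} * P {ω | R i ω < c i}
                + P {ω | (m : ℝ) ≤ R i ω} * P {ω | R i ω < c i} := add_mul _ _ _
          _ ≤ _ := add_le_add_left (mul_le_of_le_one_right zero_le hx1) _
        have hcomb : P {ω | R i ω < (m : ℝ)} + P (R i ⁻¹' Set.Ico (m : ℝ) (c i))
            ≤ P {ω | R i ω < (m : ℝ)}
              + P {ω | (m : ℝ) ≤ R i ω} * P {ω | R i ω < c i} := by
          rw [add_comm (P {ω | R i ω < (m : ℝ)})]
          exact hadd.le.trans hkey
        have hfin : P {ω | R i ω < (m : ℝ)} ≠ ⊤ := measure_ne_top _ _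
        have hres := (ENNReal.add_le_add_iff_left hfin).mp hcomb
        simp only [hB, if_pos hiN]
        exact hres
      · simp only [hB, if_neg hiN, one_mul]
        exact le_of_eq (congrArg P hpre2)
    have hQ : (∏ i ∈ Finset.range (k + 1),
        (if i < N then P {ω | (m : ℝ) ≤ R i ω} else 1)) = P A := by
      have hNk : N ≤ k + 1 := by omega
      have e2 : ∏ i ∈ Finset.range N, (if i < N then P {ω | (m : ℝ) ≤ R i ω} else 1)
          = ∏ i ∈ Finset.range (k + 1), (if i < N then P {ω | (m : ℝ) ≤ R i ω} else 1) :=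
        Finset.prod_subset (Finset.range_subset_range.mpr hNk)
          (fun x _ hx => if_neg (by simpa using hx))
      have e1 : ∏ i ∈ Finset.range N, (if i < N then P {ω | (m : ℝ) ≤ R i ω} else 1)
          = ∏ i ∈ Finset.range N, P {ω | (m : ℝ) ≤ R i ω} :=
        Finset.prod_congr rfl fun i hi => if_pos (Finset.mem_range.mp hi)
      rw [← e2, e1, hPA]
    have hX : ∏ i ∈ Finset.range (k + 1), P {ω | R i ω < c i} = a k := by
      rw [ha k]
      rw [← Finset.prod_range_reflect (fun j => P {ω | R j ω < c j}) (k + 1)]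
      refine Finset.prod_congr rfl fun i hi => ?_
      have hik : i < k + 1 := Finset.mem_range.mp hi
      have h5 : k + 1 - 1 - i = k - i := by omega
      have h6 : (k + 1 - (k - i)) * m = (i + 1) * m := by
        have : k + 1 - (k - i) = i + 1 := by omega
        rw [this]
      simp only [h5, hc]
      rw [h6]
    calc P (A ∩ D (k + 1)) ≤ P (⋂ i ∈ Finset.range (k + 1), R i ⁻¹' B i) :=
          measure_mono hsub
    _ = ∏ i ∈ Finset.range (k + 1), P (R i ⁻¹' B i) := hprod
    _ ≤ ∏ i ∈ Finset.range (k + 1),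
          (if i < N then P {ω | (m : ℝ) ≤ R i ω} else 1) * P {ω | R i ω < c i} :=
        Finset.prod_le_prod' hterm
    _ = (∏ i ∈ Finset.range (k + 1), (if i < N then P {ω | (m : ℝ) ≤ R i ω} else 1))
          * ∏ i ∈ Finset.range (k + 1), P {ω | R i ω < c i} := Finset.prod_mul_distrib
    _ = P A * a k := by rw [hQ, hX]
  -- assemble
  have hbound : ∀ k : ℕ, P (A ∩ D (k + 1)) ≤ (if k < N then 0 else P A * a k) := by
    intro k
    by_cases hk : k < N
    · rw [if_pos hk, hzero k (by omega)]
      simp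
    · rw [if_neg hk]
      exact hmain k (by omega)
  have hAVc : P (A \ V) ≤ P A * ∑' k, a (k + N) := by
    have h1' : A \ V ⊆ ⋃ j : ℕ, A ∩ D (j + N + 1) := by
      rintro ω ⟨hωA, hωV⟩
      obtain ⟨k, hk⟩ := Set.mem_iUnion.mp (hVc hωV)
      rcases Nat.lt_or_ge k N with hkN | hkN
      · exact absurd (Set.mem_inter hωA hk)
          (by rw [hzero k (by omega)]; exact Set.notMem_empty ω)
      · refine Set.mem_iUnion.mpr ⟨k - N, hωA, ?_⟩
        have he : k + 1 = k - N + N + 1 := by omega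
        rw [← he]
        exact hk
    have h2' : P (A \ V) ≤ ∑' j : ℕ, P (A ∩ D (j + N + 1)) :=
      (measure_mono h1').trans (measure_iUnion_le _)
    have h3' : (∑' j : ℕ, P (A ∩ D (j + N + 1))) ≤ ∑' j : ℕ, P A * a (j + N) :=
      ENNReal.tsum_le_tsum fun j => hmain (j + N) (by omega)
    calc P (A \ V) ≤ ∑' j : ℕ, P A * a (j + N) := h2'.trans h3'
    _ = P A * ∑' k, a (k + N) := ENNReal.tsum_mul_left
  have hle2 : P A ≤ P (A ∩ V) + P A * ∑' k, a (k + N) :=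
    (measure_le_inter_add_diff P A V).trans (add_le_add_right hAVc _)
  have hpos : P (A ∩ V) ≠ 0 := by
    intro h
    rw [h, zero_add] at hle2
    have hlt : P A * (∑' k, a (k + N)) < P A * 1 :=
      ENNReal.mul_lt_mul_right hPA0 hPAtop hN
    rw [mul_one] at hlt
    exact absurd (hle2.trans_lt hlt) (lt_irrefl _)
  calc (0 : ℝ≥0∞) < P (A ∩ V) := pos_iff_ne_zero.mpr hpos
  _ ≤ P V := measure_mono Set.inter_subset_right
end

section
/- For the heterogeneous Firework Process, if there exists an integer t ≥ 1 such that ∑_{n=0}^{∞} [ P(R_n < t·m) ]^t < ∞, then P(V) > 0. -/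
open MeasureTheory ProbabilityTheory Filter
open scoped ENNReal

/-- Auxiliary: positions grow by at most `m` per step. -/
lemma firework_aux_u_le {m : ℕ} {u : ℕ → ℕ} (humono : Monotone u)
    (hustep : ∀ n, u (n + 1) - u n ≤ m) :
    ∀ i d, u (i + d) ≤ u i + d * m := by
  intro i d
  induction d with
  | zero => simp
  | succ d ih =>
    have h1 := hustep (i + d)
    have h2 : u (i + d) ≤ u (i + d + 1) := humono (Nat.le_succ (i + d))
    have h3 : (d + 1) * m = d * m + m := by ring
    have : u (i + (d + 1)) = u (i + d + 1) := rfl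
    omega

/-- Auxiliary: `u n - u i ≤ (n - i) * m`. -/
lemma firework_aux_u_sub {m : ℕ} {u : ℕ → ℕ} (humono : Monotone u)
    (hustep : ∀ n, u (n + 1) - u n ≤ m) {i n : ℕ} (hin : i ≤ n) :
    u n - u i ≤ (n - i) * m := by
  have := firework_aux_u_le humono hustep i (n - i)
  rw [Nat.add_sub_cancel' hin] at this
  omega

/-- **Heterogeneous Firework Process.** If for some integer `t ≥ 1` one has
`∑_{n=0}^∞ [P(R_n < t·m)]^t < ∞`, then `P(V) > 0`. -/
theorem firework_heterogeneous_survival_criterion_power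
    {Ω : Type*} [MeasurableSpace Ω] (P : Measure Ω) [IsProbabilityMeasure P]
    (m : ℕ) (hm : 1 ≤ m)
    (u : ℕ → ℕ) (hu0 : u 0 = 0) (humono : StrictMono u)
    (hustep : ∀ n, u (n + 1) - u n ≤ m)
    (R : ℕ → Ω → ℝ)
    (hmeas : ∀ i, Measurable (R i))
    (hnonneg : ∀ i ω, 0 ≤ R i ω)
    (hindep : iIndepFun R P)
    (h0 : ∀ n, 0 < P {ω | R n ω < (m : ℝ)})
    (h1 : ∀ n, P {ω | R n ω < (m : ℝ)} < 1)
    (V : Set Ω)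
    (hV : V = ⋂ (n : ℕ) (_ : 1 ≤ n), ⋃ i ∈ Finset.range n,
      {ω | ((u n - u i : ℕ) : ℝ) ≤ R i ω})
    (ht : ∃ t : ℕ, 1 ≤ t ∧
      (∑' n : ℕ, (P {ω | R n ω < ((t * m : ℕ) : ℝ)}) ^ t) ≠ ⊤) :
    0 < P V := by
  classical
  obtain ⟨t, ht1, htsum⟩ := ht
  set c : ℝ := ((t * m : ℕ) : ℝ) with hc
  set E : ℕ → Set Ω := fun j => {ω | R j ω < c} with hE
  have hEmeas : ∀ j, MeasurableSet (E j) :=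
    fun j => measurableSet_lt (hmeas j) measurable_const
  have hEcomap : ∀ j,
      MeasurableSet[MeasurableSpace.comap (R j) inferInstance] (E j) :=
    fun j => ⟨Set.Iio c, measurableSet_Iio, rfl⟩
  set W : ℕ → Set Ω := fun n => ⋂ j ∈ Finset.Ico n (n + t), E j with hW
  have hWmeas : ∀ n, MeasurableSet (W n) :=
    fun n => MeasurableSet.biInter (Finset.Ico n (n + t)).countable_toSet
      fun j _ => hEmeas j
  -- probability of a window being all-small
  have hPW : ∀ n, P (W n) = ∏ j ∈ Finset.Ico n (n + t), P (E j) :=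
    fun n => hindep.meas_biInter fun j _ => hEcomap j
  have hPWle : ∀ n, P (W n) ≤ ∑ j ∈ Finset.Ico n (n + t), P (E j) ^ t := by
    intro n
    obtain ⟨j0, hj0mem, hj0max⟩ := Finset.exists_max_image (Finset.Ico n (n + t))
      (fun j => P (E j)) (Finset.nonempty_Ico.2 (by omega))
    calc P (W n) = ∏ j ∈ Finset.Ico n (n + t), P (E j) := hPW n
      _ ≤ ∏ _j ∈ Finset.Ico n (n + t), P (E j0) :=
          Finset.prod_le_prod' fun j hj => hj0max j hj
      _ = P (E j0) ^ t := by
          rw [Finset.prod_const, Nat.card_Ico, Nat.add_sub_cancel_left]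
      _ ≤ ∑ j ∈ Finset.Ico n (n + t), P (E j) ^ t :=
          Finset.single_le_sum (f := fun j => P (E j) ^ t) (fun j _ => zero_le) hj0mem
  -- total sum over all windows is finite
  have hWsum : (∑' n : ℕ, P (W n)) ≠ ⊤ := by
    have hle : ∀ n, P (W n) ≤ ∑ d ∈ Finset.range t, P (E (n + d)) ^ t := by
      intro n
      refine (hPWle n).trans_eq ?_
      rw [Finset.sum_Ico_eq_sum_range, Nat.add_sub_cancel_left]
    have hbound : (∑' n : ℕ, P (W n))
        ≤ ∑ d ∈ Finset.range t, ∑' n : ℕ, P (E (n + d)) ^ t := by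
      calc (∑' n : ℕ, P (W n))
          ≤ ∑' n : ℕ, ∑ d ∈ Finset.range t, P (E (n + d)) ^ t :=
            ENNReal.tsum_le_tsum hle
        _ = ∑ d ∈ Finset.range t, ∑' n : ℕ, P (E (n + d)) ^ t :=
            Summable.tsum_finsetSum fun d _ => ENNReal.summable
    have hshift : ∀ d : ℕ, (∑' n : ℕ, P (E (n + d)) ^ t)
        ≤ ∑' n : ℕ, P (E n) ^ t := by
      intro d
      exact Summable.tsum_le_tsum_of_inj (fun n => n + d) (add_left_injective d)
        (fun _ _ => zero_le) (fun _ => le_rfl) ENNReal.summable ENNReal.summable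
    have : (∑' n : ℕ, P (W n))
        ≤ ∑ _d ∈ Finset.range t, ∑' n : ℕ, P (E n) ^ t :=
      hbound.trans (Finset.sum_le_sum fun d _ => hshift d)
    rw [Finset.sum_const, Finset.card_range, nsmul_eq_mul] at this
    exact ne_top_of_le_ne_top (ENNReal.mul_ne_top (ENNReal.natCast_ne_top t) htsum) this
  -- tail sums become small, and individual probabilities become < 1
  have htail : ∀ᶠ i in atTop, (∑' k : ℕ, P (W (k + i))) < 1 :=
    (ENNReal.tendsto_sum_nat_add _ hWsum).eventually_lt_const zero_lt_one
  have hterm : ∀ᶠ n in atTop, P (E n) < 1 := by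
    have h := ENNReal.tendsto_atTop_zero_of_tsum_ne_top htsum
    filter_upwards [h.eventually_lt_const zero_lt_one] with n hn
    by_contra hcon
    push_neg at hcon
    exact absurd hn (not_lt.2 (one_le_pow_of_one_le' hcon t))
  have hterm' : ∀ᶠ n in atTop, P (E (n - 1)) < 1 :=
    (tendsto_sub_atTop_nat 1).eventually hterm
  obtain ⟨N, hN1, hNtail, hNterm⟩ := ((eventually_ge_atTop 1).and
    (htail.and hterm')).exists
  -- the good tail event
  set C : Set Ω := ⋂ k : ℕ, (W (k + N))ᶜ with hCdef
  have hCmeas : MeasurableSet C := MeasurableSet.iInter fun k => (hWmeas _).compl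
  have hPCpos : 0 < P C := by
    have hCc : Cᶜ = ⋃ k : ℕ, W (k + N) := by
      rw [hCdef, Set.compl_iInter]
      simp
    have hlt : P Cᶜ < 1 := by
      rw [hCc]
      exact lt_of_le_of_lt (measure_iUnion_le _) hNtail
    rw [pos_iff_ne_zero]
    intro h0'
    rw [prob_compl_eq_one_sub hCmeas, h0', tsub_zero] at hlt
    exact lt_irrefl _ hlt
  -- the initial event
  set thr : ℕ → ℝ := fun i => if i = N - 1 then c else (m : ℝ) with hthr
  set T : ℕ → Set Ω := fun i => {ω | thr i ≤ R i ω} with hT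
  have hTcomap : ∀ i,
      MeasurableSet[MeasurableSpace.comap (R i) inferInstance] (T i) :=
    fun i => ⟨Set.Ici (thr i), measurableSet_Ici, rfl⟩
  set A : Set Ω := ⋂ i ∈ Finset.range N, T i with hA
  have hPA : P A = ∏ i ∈ Finset.range N, P (T i) :=
    hindep.meas_biInter fun i _ => hTcomap i
  have hTpos : ∀ i, 0 < P (T i) := by
    intro i
    have hcompl : T i = {ω | R i ω < thr i}ᶜ := by
      ext ω; simp [hT, not_lt]
    rw [hcompl, prob_compl_eq_one_sub (measurableSet_lt (hmeas i) measurable_const),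
      tsub_pos_iff_lt]
    by_cases hi : i = N - 1
    · subst hi
      simpa [hthr] using hNterm
    · simpa [hthr, hi] using h1 i
  have hPApos : 0 < P A := by
    rw [hPA]
    exact CanonicallyOrderedAdd.prod_pos.2 fun i _ => hTpos i
  -- independence of A and C
  have hindep2 : Indep
      (⨆ i ∈ {i : ℕ | i < N}, MeasurableSpace.comap (R i) inferInstance)
      (⨆ i ∈ {i : ℕ | i < N}ᶜ, MeasurableSpace.comap (R i) inferInstance) P :=
    indep_biSup_compl (fun i => (hmeas i).comap_le) hindep.iIndep {i : ℕ | i < N}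
  have hA_meas : MeasurableSet[⨆ i ∈ {i : ℕ | i < N},
      MeasurableSpace.comap (R i) inferInstance] A := by
    refine MeasurableSet.biInter (Finset.range N).countable_toSet fun i hi => ?_
    have hmem : i ∈ {i : ℕ | i < N} := by
      simpa using Finset.mem_range.mp hi
    have hle : MeasurableSpace.comap (R i) inferInstance
        ≤ ⨆ i ∈ {i : ℕ | i < N}, MeasurableSpace.comap (R i) inferInstance :=
      le_biSup (fun i => MeasurableSpace.comap (R i) inferInstance) hmem
    exact hle _ (hTcomap i)
  have hC_meas : MeasurableSet[⨆ i ∈ {i : ℕ | i < N}ᶜ,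
      MeasurableSpace.comap (R i) inferInstance] C := by
    refine MeasurableSet.iInter fun k => MeasurableSet.compl ?_
    refine MeasurableSet.biInter (Finset.Ico (k + N) (k + N + t)).countable_toSet
      fun j hj => ?_
    have hmem : j ∈ {i : ℕ | i < N}ᶜ := by
      have := Finset.mem_Ico.mp hj
      simp only [Set.mem_compl_iff, Set.mem_setOf_eq, not_lt]
      omega
    have hle : MeasurableSpace.comap (R j) inferInstance
        ≤ ⨆ i ∈ {i : ℕ | i < N}ᶜ, MeasurableSpace.comap (R i) inferInstance :=
      le_biSup (fun i => MeasurableSpace.comap (R i) inferInstance) hmem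
    exact hle _ (hEcomap j)
  have hAC : P (A ∩ C) = P A * P C :=
    (Indep_iff _ _ _).1 hindep2 A C hA_meas hC_meas
  -- the combined event implies survival
  have hmono : Monotone u := humono.monotone
  have hmc : (m : ℝ) ≤ c := by
    rw [hc]
    exact_mod_cast Nat.le_mul_of_pos_left m ht1
  have hsub : A ∩ C ⊆ V := by
    rintro ω ⟨hωA, hωC⟩
    have hAmem : ∀ i, i < N → thr i ≤ R i ω := by
      intro i hi
      have := Set.mem_iInter₂.mp hωA i (Finset.mem_range.mpr hi)
      exact this
    have hCmem : ∀ k, ∃ j, k + N ≤ j ∧ j < k + N + t ∧ c ≤ R j ω := by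
      intro k
      have hk := Set.mem_iInter.mp hωC k
      rw [Set.mem_compl_iff, hW] at hk
      simp only [Set.mem_iInter, not_forall] at hk
      obtain ⟨j, hj, hjE⟩ := hk
      have hj' := Finset.mem_Ico.mp hj
      refine ⟨j, hj'.1, hj'.2, ?_⟩
      have : ¬ (R j ω < c) := by
        intro hlt
        exact hjE hlt
      exact not_lt.mp this
    rw [hV]
    refine Set.mem_iInter₂.mpr fun n hn => ?_
    by_cases hcase1 : n ≤ N
    · -- use index n - 1, which has R ≥ m ≥ u n - u (n-1)
      refine Set.mem_iUnion₂.mpr ⟨n - 1, Finset.mem_range.mpr (by omega), ?_⟩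
      have hstep : u n - u (n - 1) ≤ m := by
        have h' := hustep (n - 1)
        have hn' : n - 1 + 1 = n := by omega
        rw [hn'] at h'
        exact h'
      have hthrge : (m : ℝ) ≤ thr (n - 1) := by
        rw [hthr]
        by_cases h' : n - 1 = N - 1
        · simpa [h'] using hmc
        · simp [h']
      have hR : thr (n - 1) ≤ R (n - 1) ω := hAmem (n - 1) (by omega)
      have : ((u n - u (n - 1) : ℕ) : ℝ) ≤ (m : ℝ) := by exact_mod_cast hstep
      simp only [Set.mem_setOf_eq]
      linarith
    · push_neg at hcase1
      by_cases hcase2 : n < N + t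
      · -- use index N - 1, which has R ≥ t*m
        refine Set.mem_iUnion₂.mpr ⟨N - 1, Finset.mem_range.mpr (by omega), ?_⟩
        have hdist : u n - u (N - 1) ≤ t * m := by
          have h' := firework_aux_u_sub hmono hustep (show N - 1 ≤ n by omega)
          have h'' : (n - (N - 1)) * m ≤ t * m :=
            Nat.mul_le_mul_right m (by omega)
          omega
        have hR : c ≤ R (N - 1) ω := by
          have := hAmem (N - 1) (by omega)
          simpa [hthr] using this
        have : ((u n - u (N - 1) : ℕ) : ℝ) ≤ c := by
          rw [hc]; exact_mod_cast hdist
        simp only [Set.mem_setOf_eq]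
        linarith
      · -- use a window index j ∈ [n - t, n)
        push_neg at hcase2
        obtain ⟨j, hj1, hj2, hjR⟩ := hCmem (n - t - N)
        have hjn : j < n := by omega
        have hjge : n - t ≤ j := by omega
        refine Set.mem_iUnion₂.mpr ⟨j, Finset.mem_range.mpr hjn, ?_⟩
        have hdist : u n - u j ≤ t * m := by
          have h' := firework_aux_u_sub hmono hustep (le_of_lt hjn)
          have h'' : (n - j) * m ≤ t * m := Nat.mul_le_mul_right m (by omega)
          omega
        have : ((u n - u j : ℕ) : ℝ) ≤ c := by
          rw [hc]; exact_mod_cast hdist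
        simp only [Set.mem_setOf_eq]
        linarith
  calc (0 : ℝ≥0∞) < P A * P C := ENNReal.mul_pos (ne_of_gt hPApos) (ne_of_gt hPCpos)
    _ = P (A ∩ C) := hAC.symm
    _ ≤ P V := measure_mono hsub
end

section
/- For the heterogeneous Firework Process, suppose there exist a probability measure μ on [0,∞) and a sequence (b_k)_{k∈ℕ} of real numbers such that: μ([k,∞)) − P(R_n ≥ k) ≤ b_k for all k ≥ 0 and all n ≥ 0; the sequence n·(μ([n,∞)) − b_n) converges to a limit strictly greater than m; and b_n → 0 as n → ∞. Then P(V) > 0. -/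
open MeasureTheory ProbabilityTheory Filter
open scoped ENNReal

private lemma fw_anticorr {Ω : Type*} [MeasurableSpace Ω] (P : Measure Ω)
    [IsProbabilityMeasure P] {f : Ω → ℝ} (hf : Measurable f) (s t : ℝ) :
    P (f ⁻¹' (Set.Ici s ∩ Set.Iio t)) ≤ P (f ⁻¹' Set.Ici s) * P (f ⁻¹' Set.Iio t) := by
  rcases le_or_gt t s with h | h
  · have : Set.Ici s ∩ Set.Iio t = ∅ := by
      ext x
      simp only [Set.mem_inter_iff, Set.mem_Ici, Set.mem_Iio, Set.mem_empty_iff_false,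
        iff_false, not_and, not_lt]
      intro hx; exact h.trans hx
    simp [this]
  · have h1 : Set.Ici s ∩ Set.Iio t = Set.Iio t \ Set.Iio s := by
      ext x; simp only [Set.mem_inter_iff, Set.mem_Ici, Set.mem_Iio, Set.mem_diff, not_lt]
      tauto
    have h2 : f ⁻¹' Set.Iio s ⊆ f ⁻¹' Set.Iio t :=
      Set.preimage_mono (Set.Iio_subset_Iio h.le)
    have h3 : P (f ⁻¹' (Set.Ici s ∩ Set.Iio t))
        = P (f ⁻¹' Set.Iio t) - P (f ⁻¹' Set.Iio s) := by
      rw [h1, Set.preimage_diff]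
      exact measure_diff h2 (hf measurableSet_Iio).nullMeasurableSet (measure_ne_top _ _)
    have h4 : P (f ⁻¹' Set.Ici s) = 1 - P (f ⁻¹' Set.Iio s) := by
      have : f ⁻¹' Set.Ici s = (f ⁻¹' Set.Iio s)ᶜ := by
        ext x; simp [not_lt]
      rw [this, prob_compl_eq_one_sub (hf measurableSet_Iio)]
    rw [h3, h4]
    set x := P (f ⁻¹' Set.Iio s)
    set y := P (f ⁻¹' Set.Iio t)
    have hy1 : y ≤ 1 := prob_le_one
    have hxy : x * y ≤ x := by
      calc x * y ≤ x * 1 := mul_le_mul_right hy1 x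
      _ = x := mul_one x
    calc y - x ≤ y - x * y := tsub_le_tsub_left hxy y
    _ = 1 * y - x * y := by rw [one_mul]
    _ = (1 - x) * y := (ENNReal.sub_mul (fun _ _ => measure_ne_top _ _)).symm

private lemma fw_lower (u : ℕ → ℕ) (humono : StrictMono u) :
    ∀ i n, i ≤ n → u i + (n - i) ≤ u n := by
  intro i n hin
  induction n with
  | zero => simp_all
  | succ n ih =>
    rcases Nat.lt_or_ge i (n+1) with h | h
    · have hi : i ≤ n := by omega
      have h1 := ih hi
      have h2 : u n < u (n+1) := humono (Nat.lt_succ_self n)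
      omega
    · have : i = n + 1 := by omega
      simp [this]

private lemma fw_upper (u : ℕ → ℕ) (m : ℕ) (humono : StrictMono u)
    (hustep : ∀ n, u (n + 1) - u n ≤ m) :
    ∀ i n, i ≤ n → u n ≤ u i + m * (n - i) := by
  intro i n hin
  induction n with
  | zero => simp_all
  | succ n ih =>
    rcases Nat.lt_or_ge i (n+1) with h | h
    · have hi : i ≤ n := by omega
      have h1 := ih hi
      have h2 := hustep n
      have h3 : u n ≤ u (n+1) := (humono (Nat.lt_succ_self n)).le
      have h4 : n + 1 - i = (n - i) + 1 := by omega
      rw [h4]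
      have h5 : u (n+1) ≤ u n + m := by omega
      calc u (n+1) ≤ u n + m := h5
      _ ≤ u i + m * (n-i) + m := by omega
      _ = u i + m * (n - i + 1) := by ring
    · have : i = n + 1 := by omega
      simp [this]

private lemma fw_teles (n : ℕ) (hn : 0 < n) :
    ∀ t : ℕ, t ≤ n →
    ∏ i ∈ Finset.range t, (((n:ℝ) - i - 1) / ((n:ℝ) - i)) = ((n:ℝ) - t) / n := by
  intro t
  induction t with
  | zero =>
    intro _
    have hn' : (n:ℝ) ≠ 0 := by positivity
    simp [div_self hn']
  | succ t ih =>
    intro h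
    have htn : t < n := by omega
    have h1 : (0:ℝ) < (n:ℝ) - t := by
      have : (t:ℝ) < n := by exact_mod_cast htn
      linarith
    have hn' : (n:ℝ) ≠ 0 := by positivity
    rw [Finset.prod_range_succ, ih (by omega)]
    push_cast
    field_simp
    ring

private lemma fw_bernoulli (α j : ℝ) (hα : 1 ≤ α) (hj : α + 1 ≤ j) :
    1 - α / j ≤ ((j - 1)/j) ^ α := by
  have hj1 : (1:ℝ) ≤ j := by linarith
  have hj0 : (0:ℝ) < j := by linarith
  have h1 : -1 ≤ -(1/j) := by
    have : 1/j ≤ 1 := by rw [div_le_one hj0]; linarith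
    linarith
  have hB := one_add_mul_self_le_rpow_one_add h1 hα
  have e1 : 1 + α * -(1/j) = 1 - α / j := by ring
  have e2 : 1 + -(1/j) = (j-1)/j := by field_simp; ring
  rw [e1, e2] at hB
  exact hB

/-- **Heterogeneous Firework Process.** If the tails of the `R_n` are uniformly close
(from below) to the tail of a distribution `μ` on `[0,∞)` with
`lim n·(μ[n,∞) − b_n) > m` and `b_n → 0`, then `P(V) > 0`. -/
theorem firework_heterogeneous_survival_of_dominating_tail
    {Ω : Type*} [MeasurableSpace Ω] (P : Measure Ω) [IsProbabilityMeasure P]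
    (m : ℕ) (hm : 1 ≤ m)
    (u : ℕ → ℕ) (hu0 : u 0 = 0) (humono : StrictMono u)
    (hustep : ∀ n, u (n + 1) - u n ≤ m)
    (R : ℕ → Ω → ℝ)
    (hmeas : ∀ i, Measurable (R i))
    (hnonneg : ∀ i ω, 0 ≤ R i ω)
    (hindep : iIndepFun R P)
    (h0 : ∀ n, 0 < P {ω | R n ω < (m : ℝ)})
    (h1 : ∀ n, P {ω | R n ω < (m : ℝ)} < 1)
    (V : Set Ω)
    (hV : V = ⋂ (n : ℕ) (_ : 1 ≤ n), ⋃ i ∈ Finset.range n,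
      {ω | ((u n - u i : ℕ) : ℝ) ≤ R i ω})
    (μ : Measure ℝ) [IsProbabilityMeasure μ] (hμ : μ {x : ℝ | x < 0} = 0)
    (b : ℕ → ℝ)
    (hb : ∀ k n : ℕ, (μ (Set.Ici (k : ℝ))).toReal -
      (P {ω | (k : ℝ) ≤ R n ω}).toReal ≤ b k)
    (hlim : ∃ L : ℝ, (m : ℝ) < L ∧
      Tendsto (fun n : ℕ => (n : ℝ) * ((μ (Set.Ici (n : ℝ))).toReal - b n))
        atTop (nhds L))
    (hb0 : Tendsto b atTop (nhds 0)) :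
    0 < P V := by
  classical
  obtain ⟨L, hmL, hL⟩ := hlim
  have hm0 : (0:ℝ) < m := by exact_mod_cast hm
  set c : ℝ := ((m:ℝ) + L) / 2 with hc_def
  have hmc : (m:ℝ) < c := by simp only [hc_def]; linarith
  have hcL : c < L := by simp only [hc_def]; linarith
  have hc0 : 0 < c := lt_trans hm0 hmc
  set α : ℝ := c / m with hα_def
  have hα1 : 1 < α := (one_lt_div hm0).2 hmc
  have hα0 : 0 < α := lt_trans one_pos hα1
  -- eventual tail lower bound
  obtain ⟨K1, hK1⟩ := eventually_atTop.1 (hL.eventually (eventually_gt_nhds hcL))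
  set K0 : ℕ := K1 + ⌈α⌉₊ + 2 with hK0_def
  have hK0α : α + 1 ≤ (K0:ℝ) := by
    have h1 : α ≤ (⌈α⌉₊ : ℝ) := Nat.le_ceil α
    have h2 : ((⌈α⌉₊ : ℕ) : ℝ) + 1 ≤ (K0 : ℝ) := by
      have : ⌈α⌉₊ + 1 ≤ K0 := by omega
      exact_mod_cast this
    linarith
  have hK0_2 : 2 ≤ K0 := by omega
  have hK0_K1 : K1 ≤ K0 := by omega
  -- tail bound: for k ≥ K0, P(R i ≥ k) ≥ c/k
  have qge : ∀ (i k : ℕ), K0 ≤ k → ENNReal.ofReal (c / k) ≤ P (R i ⁻¹' Set.Ici (k:ℝ)) := by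
    intro i k hk
    have hk0 : (0:ℝ) < k := by
      have : 0 < k := by omega
      exact_mod_cast this
    have h1' := hK1 k (le_trans hK0_K1 hk)
    have h2' : c / k < (μ (Set.Ici (k:ℝ))).toReal - b k := by
      rw [div_lt_iff₀ hk0]
      calc c < (k:ℝ) * ((μ (Set.Ici (k:ℝ))).toReal - b k) := h1'
      _ = ((μ (Set.Ici (k:ℝ))).toReal - b k) * k := mul_comm _ _
    have h3' := hb k i
    have h4' : c / k ≤ (P {ω | (k:ℝ) ≤ R i ω}).toReal := by linarith
    have h5' : (R i ⁻¹' Set.Ici (k:ℝ)) = {ω | (k:ℝ) ≤ R i ω} := rfl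
    rw [h5']
    exact ENNReal.ofReal_le_of_le_toReal h4'
  -- per-factor bound
  have pe : ∀ i n : ℕ, i + K0 ≤ n →
      P (R i ⁻¹' Set.Iio (((u n - u i : ℕ)):ℝ)) ≤ ENNReal.ofReal (1 - α/((n:ℝ) - i)) := by
    intro i n hin
    have hin' : i ≤ n := by omega
    set k : ℕ := u n - u i with hk_def
    have hlow := fw_lower u humono i n hin'
    have hkK0 : K0 ≤ k := by omega
    have hupp := fw_upper u m humono hustep i n hin'
    have hni : (0:ℝ) < (n:ℝ) - i := by
      have : (i:ℝ) < n := by exact_mod_cast (by omega : i < n)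
      linarith
    have hk0 : (0:ℝ) < k := by
      have : 0 < k := by omega
      exact_mod_cast this
    have hk_le : (k:ℝ) ≤ (m:ℝ) * ((n:ℝ) - i) := by
      have h1 : k ≤ m * (n - i) := by omega
      calc (k:ℝ) ≤ ((m * (n-i) : ℕ):ℝ) := by exact_mod_cast h1
      _ = (m:ℝ) * ((n:ℝ) - i) := by push_cast [Nat.cast_sub hin']; ring
    have hfrac : α / ((n:ℝ) - i) ≤ c / k := by
      rw [hα_def, div_div]
      gcongr
    have hcompl : P (R i ⁻¹' Set.Iio (k:ℝ)) = 1 - P (R i ⁻¹' Set.Ici (k:ℝ)) := by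
      have he : R i ⁻¹' Set.Iio (k:ℝ) = (R i ⁻¹' Set.Ici (k:ℝ))ᶜ := by
        ext ω; simp [not_le]
      rw [he, prob_compl_eq_one_sub ((hmeas i) measurableSet_Ici)]
    rw [hcompl]
    have h6 : ENNReal.ofReal (α/((n:ℝ)-i)) ≤ P (R i ⁻¹' Set.Ici (k:ℝ)) :=
      le_trans (ENNReal.ofReal_le_ofReal hfrac) (qge i k hkK0)
    calc 1 - P (R i ⁻¹' Set.Ici (k:ℝ))
        ≤ 1 - ENNReal.ofReal (α/((n:ℝ)-i)) := tsub_le_tsub_left h6 1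
    _ = ENNReal.ofReal 1 - ENNReal.ofReal (α/((n:ℝ)-i)) := by rw [ENNReal.ofReal_one]
    _ = ENNReal.ofReal (1 - α/((n:ℝ)-i)) := (ENNReal.ofReal_sub _ (by positivity)).symm
  -- independence product formula
  have hprod : ∀ (S : Finset ℕ) (s : ℕ → Set ℝ), (∀ i, MeasurableSet (s i)) →
      P (⋂ i ∈ S, R i ⁻¹' s i) = ∏ i ∈ S, P (R i ⁻¹' s i) := by
    intro S s hs
    exact hindep.meas_biInter fun i _ => ⟨s i, hs i, rfl⟩
  -- the dominating summable bound
  set g : ℕ → ℝ := fun n => (((K0:ℝ) - 1) / n) ^ α with hg_def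
  have hg_nonneg : ∀ n, 0 ≤ g n := by
    intro n
    apply Real.rpow_nonneg
    apply div_nonneg _ (Nat.cast_nonneg n)
    have : (1:ℝ) ≤ (K0:ℝ) := by exact_mod_cast (by omega : 1 ≤ K0)
    linarith
  -- product bound over range n
  have hAbound : ∀ n : ℕ, K0 ≤ n →
      (∏ i ∈ Finset.range n, P (R i ⁻¹' Set.Iio (((u n - u i : ℕ)):ℝ)))
        ≤ ENNReal.ofReal (g n) := by
    intro n hn
    set t : ℕ := n - K0 + 1 with ht_def
    have htn : t ≤ n := by omega
    have hT : Finset.range t ⊆ Finset.range n := by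
      apply Finset.range_subset_range.2 htn
    have hmem : ∀ i ∈ Finset.range t, i + K0 ≤ n := by
      intro i hi
      have := Finset.mem_range.1 hi
      omega
    have hni_pos : ∀ i ∈ Finset.range t, (0:ℝ) < (n:ℝ) - i := by
      intro i hi
      have h := hmem i hi
      have : (i:ℝ) < n := by exact_mod_cast (by omega : i < n)
      linarith
    have hK0ni : ∀ i ∈ Finset.range t, (K0:ℝ) ≤ (n:ℝ) - i := by
      intro i hi
      have h := hmem i hi
      have hc2 : ((K0:ℕ):ℝ) ≤ ((n - i : ℕ):ℝ) := by exact_mod_cast (by omega : K0 ≤ n - i)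
      rwa [Nat.cast_sub (by omega : i ≤ n)] at hc2
    have hnn : ∀ i ∈ Finset.range t, 0 ≤ 1 - α / ((n:ℝ) - i) := by
      intro i hi
      have h := hmem i hi
      have h2 : α + 1 ≤ (n:ℝ) - i := le_trans hK0α (hK0ni i hi)
      have h4 : 0 < (n:ℝ) - i := by linarith
      have : α / ((n:ℝ) - i) ≤ 1 := by
        rw [div_le_one h4]; linarith
      linarith
    calc ∏ i ∈ Finset.range n, P (R i ⁻¹' Set.Iio (((u n - u i : ℕ)):ℝ))
        = (∏ i ∈ Finset.range n \ Finset.range t, P (R i ⁻¹' Set.Iio (((u n - u i : ℕ)):ℝ)))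
          * ∏ i ∈ Finset.range t, P (R i ⁻¹' Set.Iio (((u n - u i : ℕ)):ℝ)) :=
          (Finset.prod_sdiff hT).symm
    _ ≤ 1 * ∏ i ∈ Finset.range t, P (R i ⁻¹' Set.Iio (((u n - u i : ℕ)):ℝ)) := by
        apply mul_le_mul_left
        apply Finset.prod_le_one'
        intro i _
        exact prob_le_one
    _ = ∏ i ∈ Finset.range t, P (R i ⁻¹' Set.Iio (((u n - u i : ℕ)):ℝ)) := one_mul _
    _ ≤ ∏ i ∈ Finset.range t, ENNReal.ofReal (1 - α/((n:ℝ) - i)) := by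
        apply Finset.prod_le_prod'
        intro i hi
        exact pe i n (hmem i hi)
    _ = ENNReal.ofReal (∏ i ∈ Finset.range t, (1 - α/((n:ℝ) - i))) :=
        (ENNReal.ofReal_prod_of_nonneg hnn).symm
    _ ≤ ENNReal.ofReal (g n) := by
        apply ENNReal.ofReal_le_ofReal
        calc ∏ i ∈ Finset.range t, (1 - α/((n:ℝ) - i))
            ≤ ∏ i ∈ Finset.range t, (((n:ℝ) - i - 1)/((n:ℝ) - i)) ^ α := by
              apply Finset.prod_le_prod hnn
              intro i hi
              have h2 : α + 1 ≤ (n:ℝ) - i := le_trans hK0α (hK0ni i hi)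
              exact fw_bernoulli α ((n:ℝ) - i) hα1.le h2
        _ = (∏ i ∈ Finset.range t, (((n:ℝ) - i - 1)/((n:ℝ) - i))) ^ α := by
              rw [← Real.finset_prod_rpow]
              intro i hi
              have h4 := hni_pos i hi
              have h5 : α + 1 ≤ (n:ℝ) - i := le_trans hK0α (hK0ni i hi)
              apply div_nonneg _ h4.le
              linarith
        _ = (((n:ℝ) - t)/n) ^ α := by rw [fw_teles n (by omega) t htn]
        _ = g n := by
              rw [hg_def]
              congr 2
              have : ((t:ℕ):ℝ) = (n:ℝ) - (K0:ℝ) + 1 := by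
                rw [ht_def]
                push_cast [Nat.cast_sub (by omega : K0 ≤ n)]
                ring
              rw [this]
              ring
  -- summability of the dominating bound in ℝ≥0∞
  set hh : ℕ → ℝ≥0∞ := fun n => ENNReal.ofReal (g n) with hh_def
  have hg_sum : Summable g := by
    have hsum1 : Summable (fun n : ℕ => ((K0:ℝ)-1)^α * (((n:ℝ)^α)⁻¹)) :=
      (Real.summable_nat_rpow_inv.2 hα1).mul_left _
    apply hsum1.congr
    intro n
    have hK1' : (0:ℝ) ≤ (K0:ℝ) - 1 := by
      have : (1:ℝ) ≤ (K0:ℝ) := by exact_mod_cast (by omega : 1 ≤ K0)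
      linarith
    simp only [hg_def]
    rw [Real.div_rpow hK1' (Nat.cast_nonneg n), div_eq_mul_inv]
  have hfin : ∑' n, hh n ≠ ⊤ := by
    rw [hh_def]
    rw [← ENNReal.ofReal_tsum_of_nonneg hg_nonneg hg_sum]
    exact ENNReal.ofReal_ne_top
  obtain ⟨N, hNK0, hN2⟩ : ∃ N, K0 ≤ N ∧ ∑' k, hh (k + (N+1)) < 1/2 := by
    have ht := (ENNReal.tendsto_sum_nat_add hh hfin).eventually
      (gt_mem_nhds (by norm_num : (0:ℝ≥0∞) < 1/2))
    obtain ⟨M, hM⟩ := eventually_atTop.1 ht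
    refine ⟨max K0 M, le_max_left _ _, hM _ ?_⟩
    have := le_max_right K0 M
    omega
  -- the good event G
  set G : Set Ω := ⋂ i ∈ Finset.range N, R i ⁻¹' Set.Ici (m:ℝ) with hG_def
  have hGmeas : MeasurableSet G := by
    apply Set.Finite.measurableSet_biInter (Finset.finite_toSet _)
    intro i _
    exact (hmeas i) measurableSet_Ici
  have hpG : P G = ∏ i ∈ Finset.range N, P (R i ⁻¹' Set.Ici (m:ℝ)) :=
    hprod _ _ (fun _ => measurableSet_Ici)
  have hpG0 : P G ≠ 0 := by
    rw [hpG, Finset.prod_ne_zero_iff]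
    intro i _
    have he : R i ⁻¹' Set.Ici (m:ℝ) = {ω | R i ω < (m:ℝ)}ᶜ := by
      ext ω; simp [not_lt]
    rw [he, prob_compl_eq_one_sub (measurableSet_lt (hmeas i) measurable_const)]
    exact (tsub_pos_iff_lt.2 (h1 i)).ne'
  -- the failure events
  set A : ℕ → Set Ω := fun n => ⋂ i ∈ Finset.range n, R i ⁻¹' Set.Iio (((u n - u i : ℕ)):ℝ)
    with hA_def
  -- key estimate
  have hGA : ∀ n : ℕ, N + 1 ≤ n → P (G ∩ A n) ≤ P G * hh n := by
    intro n hn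
    set s : ℕ → Set ℝ := fun i =>
      (if i < N then Set.Ici (m:ℝ) else Set.univ) ∩ Set.Iio (((u n - u i : ℕ)):ℝ) with hs_def
    have hs_meas : ∀ i, MeasurableSet (s i) := by
      intro i
      apply MeasurableSet.inter _ measurableSet_Iio
      split_ifs
      exacts [measurableSet_Ici, MeasurableSet.univ]
    have hs_mem : ∀ (i : ℕ) (x : ℝ), x ∈ s i ↔ ((i < N → (m:ℝ) ≤ x) ∧ x < ((u n - u i : ℕ):ℝ)) := by
      intro i x
      rw [hs_def]
      by_cases hiN : i < N
      · simp [hiN]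
      · simp [hiN]
    have hGA_eq : G ∩ A n = ⋂ i ∈ Finset.range n, R i ⁻¹' s i := by
      ext ω
      simp only [hG_def, hA_def, Set.mem_inter_iff, Set.mem_iInter, Set.mem_preimage,
        Finset.mem_range, Set.mem_Ici, Set.mem_Iio, hs_mem]
      constructor
      · rintro ⟨hg, ha⟩ i hi
        exact ⟨fun hiN => hg i hiN, ha i hi⟩
      · intro hval
        refine ⟨fun i hiN => (hval i (by omega)).1 hiN, fun i hi => (hval i hi).2⟩
    rw [hGA_eq, hprod _ _ hs_meas]
    have hstep : ∀ i ∈ Finset.range n,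
        P (R i ⁻¹' s i) ≤ (if i < N then P (R i ⁻¹' Set.Ici (m:ℝ)) else 1)
          * P (R i ⁻¹' Set.Iio (((u n - u i : ℕ)):ℝ)) := by
      intro i _
      by_cases hiN : i < N
      · rw [if_pos hiN]
        have he : s i = Set.Ici (m:ℝ) ∩ Set.Iio (((u n - u i : ℕ)):ℝ) := by
          rw [hs_def]; simp [hiN]
        rw [he]
        exact fw_anticorr P (hmeas i) _ _
      · rw [if_neg hiN]
        have he : s i = Set.Iio (((u n - u i : ℕ)):ℝ) := by
          rw [hs_def]; simp [hiN]
        rw [he, one_mul]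
    calc ∏ i ∈ Finset.range n, P (R i ⁻¹' s i)
        ≤ ∏ i ∈ Finset.range n, ((if i < N then P (R i ⁻¹' Set.Ici (m:ℝ)) else 1)
            * P (R i ⁻¹' Set.Iio (((u n - u i : ℕ)):ℝ))) := Finset.prod_le_prod' hstep
    _ = (∏ i ∈ Finset.range n, (if i < N then P (R i ⁻¹' Set.Ici (m:ℝ)) else 1))
          * ∏ i ∈ Finset.range n, P (R i ⁻¹' Set.Iio (((u n - u i : ℕ)):ℝ)) :=
        Finset.prod_mul_distrib
    _ = P G * ∏ i ∈ Finset.range n, P (R i ⁻¹' Set.Iio (((u n - u i : ℕ)):ℝ)) := by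
        congr 1
        rw [← Finset.prod_filter]
        rw [hpG]
        have hfil : (Finset.range n).filter (fun i => i < N) = Finset.range N := by
          ext i
          simp only [Finset.mem_filter, Finset.mem_range]
          omega
        rw [hfil]
    _ ≤ P G * hh n := mul_le_mul_right (hAbound n (by omega)) _
  -- V is measurable
  have hVmeas : MeasurableSet V := by
    rw [hV]
    apply MeasurableSet.iInter
    intro n
    apply MeasurableSet.iInter
    intro _
    apply Set.Finite.measurableSet_biUnion (Finset.finite_toSet _)
    intro i _
    exact measurableSet_le measurable_const (hmeas i)
  -- on G, failure can only happen past N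
  have hsub : G ∩ Vᶜ ⊆ ⋃ j : ℕ, (G ∩ A (N + 1 + j)) := by
    rintro ω ⟨hωG, hωV⟩
    rw [hV] at hωV
    rw [Set.mem_compl_iff] at hωV
    have hωV' : ∃ n, 1 ≤ n ∧ ∀ i, i < n → R i ω < ((u n - u i : ℕ):ℝ) := by
      by_contra hcon
      push_neg at hcon
      apply hωV
      refine Set.mem_iInter.2 fun n => Set.mem_iInter.2 fun hn => ?_
      obtain ⟨i, hi, hRi⟩ := hcon n hn
      exact Set.mem_biUnion (Finset.mem_range.2 hi) hRi
    obtain ⟨n, hn1, hfail⟩ := hωV'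
    have hnN : N + 1 ≤ n := by
      by_contra hcon
      push_neg at hcon
      have hi : n - 1 < N := by omega
      have hg : (m:ℝ) ≤ R (n-1) ω :=
        (Set.mem_iInter₂.1 hωG) (n-1) (Finset.mem_range.2 hi)
      have hfe := hfail (n-1) (by omega)

      have hcast : ((u n - u (n-1) : ℕ):ℝ) ≤ (m:ℝ) := by
        have h9 : u n - u (n-1) ≤ m := by
          have he : n - 1 + 1 = n := by omega
          calc u n - u (n-1) = u ((n-1)+1) - u (n-1) := by rw [he]
          _ ≤ m := hustep (n-1)
        exact_mod_cast h9
      linarith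
    refine Set.mem_iUnion.2 ⟨n - (N+1), ?_⟩
    have hidx : N + 1 + (n - (N+1)) = n := by omega
    rw [hidx]
    refine ⟨hωG, ?_⟩
    simp only [hA_def, Set.mem_iInter, Set.mem_preimage, Set.mem_Iio, Finset.mem_range]
    intro i hi
    exact hfail i hi
  have hVcsub : P (G ∩ Vᶜ) ≤ P G * (1/2) := by
    calc P (G ∩ Vᶜ) ≤ P (⋃ j : ℕ, (G ∩ A (N+1+j))) := measure_mono hsub
    _ ≤ ∑' j : ℕ, P (G ∩ A (N+1+j)) := measure_iUnion_le _
    _ ≤ ∑' j : ℕ, P G * hh (N+1+j) := ENNReal.tsum_le_tsum (fun j => hGA (N+1+j) (by omega))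
    _ = P G * ∑' j : ℕ, hh (N+1+j) := ENNReal.tsum_mul_left
    _ = P G * ∑' j : ℕ, hh (j + (N+1)) := by
        congr 1
        apply tsum_congr
        intro j
        rw [add_comm]
    _ ≤ P G * (1/2) := mul_le_mul_right hN2.le _
  have hsplit : P (G ∩ V) + P (G ∩ Vᶜ) = P G := by
    have hd := measure_inter_add_diff (μ := P) G hVmeas
    rwa [Set.diff_eq] at hd
  have hGV : 0 < P (G ∩ V) := by
    rcases eq_or_ne (P (G ∩ V)) 0 with hz | hz
    · exfalso
      rw [hz, zero_add] at hsplit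
      have hle : P G ≤ P G * (1/2) := hsplit ▸ hVcsub
      have hlt : P G * (1/2) < P G * 1 :=
        ENNReal.mul_lt_mul_right hpG0 (measure_ne_top _ _) (by norm_num : (1/2 : ℝ≥0∞) < 1)
      rw [mul_one] at hlt
      exact absurd (lt_of_le_of_lt hle hlt) (lt_irrefl _)
    · exact pos_iff_ne_zero.2 hz
  calc (0:ℝ≥0∞) < P (G ∩ V) := hGV
  _ ≤ P V := measure_mono Set.inter_subset_right
end

section
/- For the heterogeneous Firework Process, P(V) ≥ ∏_{j=0}^{∞} [ 1 − ∏_{i=0}^{j} P(R_{j−i} < (i+1)m) ]. -/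
open MeasureTheory ProbabilityTheory Filter Set
open scoped ENNReal

private lemma firework_rearrange {a b c d : ℝ≥0∞} (hab : a ≤ b) (hcd : c ≤ d) :
    a * d + b * c ≤ a * c + b * d := by
  obtain ⟨e, rfl⟩ := exists_add_of_le hcd
  rw [mul_add, mul_add]
  calc a * c + a * e + b * c = a * c + (a * e + b * c) := by ring
    _ ≤ a * c + (b * e + b * c) := by
        exact add_le_add_right (add_le_add_left (mul_le_mul_left hab e) _) _
    _ = a * c + (b * c + b * e) := by ring

private lemma firework_chebyshev {α : Type*} [MeasurableSpace α] [LinearOrder α]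
    (μ : Measure α) [IsProbabilityMeasure μ] {f g : α → ℝ≥0∞}
    (hf : Measurable f) (hg : Measurable g) (hfm : Monotone f) (hgm : Monotone g) :
    (∫⁻ x, f x ∂μ) * ∫⁻ x, g x ∂μ ≤ ∫⁻ x, f x * g x ∂μ := by
  have key : ∀ x y, f x * g y + f y * g x ≤ f x * g x + f y * g y := by
    intro x y
    rcases le_total x y with h | h
    · exact firework_rearrange (hfm h) (hgm h)
    · calc f x * g y + f y * g x = f y * g x + f x * g y := add_comm _ _
        _ ≤ f y * g y + f x * g x := firework_rearrange (hfm h) (hgm h)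
        _ = f x * g x + f y * g y := add_comm _ _
  have hint := lintegral_mono (μ := μ.prod μ)
    (fun z : α × α => key z.1 z.2)
  have h1 : ∫⁻ z : α × α, (f z.1 * g z.2 + f z.2 * g z.1) ∂(μ.prod μ)
      = (∫⁻ x, f x ∂μ) * (∫⁻ x, g x ∂μ) + (∫⁻ x, f x ∂μ) * (∫⁻ x, g x ∂μ) := by
    rw [lintegral_add_left (show Measurable fun z : α × α => f z.1 * g z.2 from (hf.comp measurable_fst).mul (hg.comp measurable_snd))]
    have e2 : ∫⁻ z : α × α, f z.2 * g z.1 ∂(μ.prod μ)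
        = (∫⁻ x, g x ∂μ) * (∫⁻ x, f x ∂μ) := by
      have : (fun z : α × α => f z.2 * g z.1) = fun z : α × α => g z.1 * f z.2 := by
        funext z; exact mul_comm _ _
      rw [this, lintegral_prod_mul hg.aemeasurable hf.aemeasurable]
    rw [lintegral_prod_mul hf.aemeasurable hg.aemeasurable, e2, mul_comm (∫⁻ x, g x ∂μ)]
  have h2 : ∫⁻ z : α × α, (f z.1 * g z.1 + f z.2 * g z.2) ∂(μ.prod μ)
      = (∫⁻ x, f x * g x ∂μ) + (∫⁻ x, f x * g x ∂μ) := by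
    rw [lintegral_add_left (show Measurable fun z : α × α => f z.1 * g z.1 from (hf.comp measurable_fst).mul (hg.comp measurable_fst))]
    have e1 : ∫⁻ z : α × α, f z.1 * g z.1 ∂(μ.prod μ) = ∫⁻ x, f x * g x ∂μ := by
      have := lintegral_prod_mul (μ := μ) (ν := μ) (hf.mul hg).aemeasurable
        (aemeasurable_const (b := (1 : ℝ≥0∞)))
      simpa using this
    have e2 : ∫⁻ z : α × α, f z.2 * g z.2 ∂(μ.prod μ) = ∫⁻ x, f x * g x ∂μ := by
      have := lintegral_prod_mul (μ := μ) (ν := μ)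
        (aemeasurable_const (b := (1 : ℝ≥0∞))) (hf.mul hg).aemeasurable
      simpa using this
    rw [e1, e2]
  rw [h1, h2] at hint
  have h2' : (2 : ℝ≥0∞) * ((∫⁻ x, f x ∂μ) * ∫⁻ x, g x ∂μ) ≤ 2 * ∫⁻ x, f x * g x ∂μ := by
    rw [two_mul, two_mul]; exact hint
  exact (ENNReal.mul_le_mul_iff_right two_ne_zero ENNReal.ofNat_ne_top).mp h2'

private lemma firework_harris : ∀ (N : ℕ) (μ : Fin N → Measure ℝ),
    (∀ i, IsProbabilityMeasure (μ i)) →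
    ∀ (A B : Set (Fin N → ℝ)), MeasurableSet A → MeasurableSet B →
    (∀ x y : Fin N → ℝ, x ≤ y → x ∈ A → y ∈ A) →
    (∀ x y : Fin N → ℝ, x ≤ y → x ∈ B → y ∈ B) →
    Measure.pi μ A * Measure.pi μ B ≤ Measure.pi μ (A ∩ B) := by
  intro N
  induction N with
  | zero =>
    intro μ hμ A B hA hB hAu hBu
    haveI := hμ
    haveI : IsProbabilityMeasure (Measure.pi μ) := by
      constructor
      rw [Measure.pi_univ]; simp
    have hdec : ∀ S : Set (Fin 0 → ℝ), S = ∅ ∨ S = univ := by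
      intro S
      by_cases h : (fun i => (0:ℝ)) ∈ S
      · right; ext x
        simp only [mem_univ, iff_true]
        have : x = fun i => (0:ℝ) := by funext i; exact absurd i.2 (by omega)
        rwa [this]
      · left; ext x
        simp only [mem_empty_iff_false, iff_false]
        intro hx
        have : x = fun i => (0:ℝ) := by funext i; exact absurd i.2 (by omega)
        rw [this] at hx; exact h hx
    rcases hdec A with rfl | rfl
    · simp
    · rcases hdec B with rfl | rfl
      · simp
      · simp
  | succ N IH =>
    intro μ hμ A B hA hB hAu hBu
    haveI := hμ
    set e := MeasurableEquiv.piFinSuccAbove (fun _ : Fin (N+1) => ℝ) 0 with he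
    set μ' : Fin N → Measure ℝ := fun j => μ ((0 : Fin (N+1)).succAbove j) with hμ'
    haveI : ∀ j, IsProbabilityMeasure (μ' j) := fun j => hμ _
    set ν := Measure.pi μ' with hν
    haveI : IsProbabilityMeasure ν := by
      constructor
      rw [hν, Measure.pi_univ]; simp
    have hpres : MeasurePreserving e (Measure.pi μ) ((μ 0).prod ν) :=
      measurePreserving_piFinSuccAbove μ 0
    -- e.symm is monotone
    have hsymm_mono : ∀ p q : ℝ × (Fin N → ℝ), p ≤ q → e.symm p ≤ e.symm q := by
      intro p q hpq
      intro j
      have hesymm : ∀ r : ℝ × (Fin N → ℝ), e.symm r = (0 : Fin (N+1)).insertNth r.1 r.2 := by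
        intro r; rfl
      rw [hesymm, hesymm]
      induction j using Fin.cases with
      | zero =>
        simpa using hpq.1
      | succ k =>
        have h0 : (k.succ : Fin (N+1)) = (0 : Fin (N+1)).succAbove k := by
          simp [Fin.succAbove_zero]
        rw [h0, Fin.insertNth_apply_succAbove, Fin.insertNth_apply_succAbove]
        exact hpq.2 k
    set A' : Set (ℝ × (Fin N → ℝ)) := ⇑e.symm ⁻¹' A with hA'def
    set B' : Set (ℝ × (Fin N → ℝ)) := ⇑e.symm ⁻¹' B with hB'def
    have hA' : MeasurableSet A' := hA.preimage e.symm.measurable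
    have hB' : MeasurableSet B' := hB.preimage e.symm.measurable
    have hAe : ⇑e ⁻¹' A' = A := by
      ext x; simp [hA'def]
    have hBe : ⇑e ⁻¹' B' = B := by
      ext x; simp [hB'def]
    have hA'u : ∀ p q : ℝ × (Fin N → ℝ), p ≤ q → p ∈ A' → q ∈ A' :=
      fun p q hpq hp => hAu _ _ (hsymm_mono p q hpq) hp
    have hB'u : ∀ p q : ℝ × (Fin N → ℝ), p ≤ q → p ∈ B' → q ∈ B' :=
      fun p q hpq hp => hBu _ _ (hsymm_mono p q hpq) hp
    -- measures via sections
    have happly : ∀ (S : Set (ℝ × (Fin N → ℝ))), MeasurableSet S →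
        ((μ 0).prod ν) S = ∫⁻ t, ν (Prod.mk t ⁻¹' S) ∂(μ 0) :=
      fun S hS => Measure.prod_apply hS
    have hμA : Measure.pi μ A = ((μ 0).prod ν) A' := by
      rw [← hAe]; exact hpres.measure_preimage hA'.nullMeasurableSet
    have hμB : Measure.pi μ B = ((μ 0).prod ν) B' := by
      rw [← hBe]; exact hpres.measure_preimage hB'.nullMeasurableSet
    have hμAB : Measure.pi μ (A ∩ B) = ((μ 0).prod ν) (A' ∩ B') := by
      rw [← hAe, ← hBe, ← preimage_inter]
      exact hpres.measure_preimage (hA'.inter hB').nullMeasurableSet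
    set φ : ℝ → ℝ≥0∞ := fun t => ν (Prod.mk t ⁻¹' A') with hφ
    set ψ : ℝ → ℝ≥0∞ := fun t => ν (Prod.mk t ⁻¹' B') with hψ
    have hφm : Measurable φ := measurable_measure_prodMk_left hA'
    have hψm : Measurable ψ := measurable_measure_prodMk_left hB'
    have hφmono : Monotone φ := by
      intro t t' htt'
      refine measure_mono fun f hf => ?_
      exact hA'u (t, f) (t', f) ⟨htt', le_refl f⟩ hf
    have hψmono : Monotone ψ := by
      intro t t' htt'
      refine measure_mono fun f hf => ?_
      exact hB'u (t, f) (t', f) ⟨htt', le_refl f⟩ hf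
    have hpoint : ∀ t : ℝ, φ t * ψ t ≤ ν (Prod.mk t ⁻¹' (A' ∩ B')) := by
      intro t
      rw [preimage_inter]
      refine IH μ' (fun j => hμ _) _ _
        (hA'.preimage measurable_prodMk_left)
        (hB'.preimage measurable_prodMk_left) ?_ ?_
      · intro x y hxy hx
        exact hA'u (t, x) (t, y) ⟨le_refl t, hxy⟩ hx
      · intro x y hxy hx
        exact hB'u (t, x) (t, y) ⟨le_refl t, hxy⟩ hx
    calc Measure.pi μ A * Measure.pi μ B
        = (∫⁻ t, φ t ∂(μ 0)) * ∫⁻ t, ψ t ∂(μ 0) := by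
          rw [hμA, hμB, happly _ hA', happly _ hB']
      _ ≤ ∫⁻ t, φ t * ψ t ∂(μ 0) := firework_chebyshev _ hφm hψm hφmono hψmono
      _ ≤ ∫⁻ t, ν (Prod.mk t ⁻¹' (A' ∩ B')) ∂(μ 0) := lintegral_mono hpoint
      _ = Measure.pi μ (A ∩ B) := by rw [hμAB, happly _ (hA'.inter hB')]

private lemma firework_harris_iInter (N : ℕ) (μ : Fin N → Measure ℝ)
    (hμ : ∀ i, IsProbabilityMeasure (μ i)) (C : ℕ → Set (Fin N → ℝ))
    (hCm : ∀ n, MeasurableSet (C n))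
    (hCu : ∀ n, ∀ x y : Fin N → ℝ, x ≤ y → x ∈ C n → y ∈ C n) :
    ∀ k : ℕ, ∏ n ∈ Finset.range k, Measure.pi μ (C n) ≤
      Measure.pi μ (⋂ n ∈ Finset.range k, C n) := by
  haveI := hμ
  haveI : IsProbabilityMeasure (Measure.pi μ) := by
    constructor; rw [Measure.pi_univ]; simp
  intro k
  induction k with
  | zero => simp
  | succ k IHk =>
    have hIm : MeasurableSet (⋂ n ∈ Finset.range k, C n) :=
      MeasurableSet.biInter (Finset.range k).countable_toSet fun n _ => hCm n
    have hIu : ∀ x y : Fin N → ℝ, x ≤ y →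
        x ∈ (⋂ n ∈ Finset.range k, C n) → y ∈ (⋂ n ∈ Finset.range k, C n) := by
      intro x y hxy hx
      simp only [mem_iInter] at hx ⊢
      exact fun n hn => hCu n x y hxy (hx n hn)
    have hstep := firework_harris N μ hμ _ _ hIm (hCm k) hIu (hCu k)
    have hset : (⋂ n ∈ Finset.range (k+1), C n)
        = (⋂ n ∈ Finset.range k, C n) ∩ C k := by
      ext x
      simp only [mem_iInter, mem_inter_iff, Finset.mem_range]
      constructor
      · intro h; exact ⟨fun n hn => h n (by omega), h k (by omega)⟩
      · rintro ⟨h1, h2⟩ n hn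
        rcases Nat.lt_succ_iff_lt_or_eq.mp hn with h | rfl
        · exact h1 n h
        · exact h2
    rw [Finset.prod_range_succ, hset]
    calc (∏ n ∈ Finset.range k, Measure.pi μ (C n)) * Measure.pi μ (C k)
        ≤ Measure.pi μ (⋂ n ∈ Finset.range k, C n) * Measure.pi μ (C k) :=
          mul_le_mul_left IHk _
      _ ≤ _ := hstep

private lemma firework_tprod_le (a : ℕ → ℝ≥0∞) (ha : ∀ n, a n ≤ 1) (N : ℕ) :
    ∏' n, a n ≤ ∏ n ∈ Finset.range N, a n := by
  have hanti : Antitone fun s : Finset ℕ => ∏ i ∈ s, a i := by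
    intro s t hst
    simp only []
    rw [← Finset.prod_sdiff hst]
    calc (∏ i ∈ t \ s, a i) * ∏ i ∈ s, a i ≤ 1 * ∏ i ∈ s, a i :=
          mul_le_mul_left (Finset.prod_le_one (fun i _ => zero_le) fun i _ => ha i) _
      _ = ∏ i ∈ s, a i := one_mul _
  have hp : HasProd a (⨅ s : Finset ℕ, ∏ i ∈ s, a i) := tendsto_atTop_iInf hanti
  calc ∏' n, a n = ⨅ s : Finset ℕ, ∏ i ∈ s, a i := hp.tprod_eq
    _ ≤ ∏ i ∈ Finset.range N, a i := iInf_le _ _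

/-- **Heterogeneous Firework Process.**
`P(V) ≥ ∏_{j=0}^∞ [1 − ∏_{i=0}^{j} P(R_{j-i} < (i+1)m)]`. -/
theorem firework_heterogeneous_lower_bound
    {Ω : Type*} [MeasurableSpace Ω] (P : Measure Ω) [IsProbabilityMeasure P]
    (m : ℕ) (hm : 1 ≤ m)
    (u : ℕ → ℕ) (hu0 : u 0 = 0) (humono : StrictMono u)
    (hustep : ∀ n, u (n + 1) - u n ≤ m)
    (R : ℕ → Ω → ℝ)
    (hmeas : ∀ i, Measurable (R i))
    (hnonneg : ∀ i ω, 0 ≤ R i ω)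
    (hindep : iIndepFun R P)
    (h0 : ∀ n, 0 < P {ω | R n ω < (m : ℝ)})
    (h1 : ∀ n, P {ω | R n ω < (m : ℝ)} < 1)
    (V : Set Ω)
    (hV : V = ⋂ (n : ℕ) (_ : 1 ≤ n), ⋃ i ∈ Finset.range n,
      {ω | ((u n - u i : ℕ) : ℝ) ≤ R i ω}) :
    P V ≥ ∏' j : ℕ, (1 - ∏ i ∈ Finset.range (j + 1),
      P {ω | R (j - i) ω < (((i + 1) * m : ℕ) : ℝ)}) := by
  classical
  set q : ℕ → ℝ≥0∞ := fun j => ∏ i ∈ Finset.range (j + 1),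
      P {ω | R (j - i) ω < (((i + 1) * m : ℕ) : ℝ)} with hq
  set B : ℕ → Set Ω := fun n =>
      ⋃ i ∈ Finset.range n, {ω | ((u n - u i : ℕ) : ℝ) ≤ R i ω} with hB
  have hBmeas : ∀ n, MeasurableSet (B n) := by
    intro n
    refine MeasurableSet.biUnion (Finset.range n).countable_toSet fun i _ => ?_
    exact measurableSet_le measurable_const (hmeas i)
  have hVB : V = ⋂ n, B (n + 1) := by
    rw [hV]; ext ω
    simp only [Set.mem_iInter]
    constructor
    · intro h n; exact h (n + 1) (by omega)
    · intro h n hn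
      obtain ⟨k, rfl⟩ : ∃ k, n = k + 1 := ⟨n - 1, by omega⟩
      exact h k
  set T : ℕ → Set Ω := fun N => ⋂ n ∈ Finset.range N, B (n + 1) with hT
  have hTmeas : ∀ N, MeasurableSet (T N) :=
    fun N => MeasurableSet.biInter (Finset.range N).countable_toSet fun n _ => hBmeas (n + 1)
  have hPV : P V = ⨅ N, P (T N) := by
    have hVT : V = ⋂ N, T N := by
      rw [hVB]; ext ω
      simp only [hT, Set.mem_iInter, Finset.mem_range]
      constructor
      · intro h N n _; exact h n
      · intro h n; exact h (n + 1) n (by omega)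
    rw [hVT]
    refine Directed.measure_iInter (fun N => (hTmeas N).nullMeasurableSet) ?_
      ⟨0, measure_ne_top _ _⟩
    intro N M
    refine ⟨max N M, ?_, ?_⟩ <;>
    · intro ω hω
      simp only [hT, Set.mem_iInter, Finset.mem_range] at hω ⊢
      intro n hn
      exact hω n (by omega)
  have hugrow : ∀ i k, u (i + k) ≤ u i + k * m := by
    intro i k
    induction k with
    | zero => simp
    | succ k IH =>
      have h1 := hustep (i + k)
      have h2 : u (i + k) ≤ u (i + k + 1) := humono.monotone (Nat.le_succ _)
      calc u (i + (k + 1)) = u (i + k + 1) := rfl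
        _ ≤ u (i + k) + m := by omega
        _ ≤ (u i + k * m) + m := by omega
        _ = u i + (k + 1) * m := by ring
  have hub : ∀ n i : ℕ, i ≤ n → u (n + 1) - u i ≤ (n + 1 - i) * m := by
    intro n i hi
    have h := hugrow i (n + 1 - i)
    have he : i + (n + 1 - i) = n + 1 := by omega
    rw [he] at h
    omega
  have key : ∀ N, ∏ j ∈ Finset.range N, (1 - q j) ≤ P (T N) := by
    intro N
    set X : Ω → (Fin N → ℝ) := fun ω i => R i ω with hX
    have hXm : Measurable X := measurable_pi_lambda _ fun i => hmeas i
    set μi : Fin N → Measure ℝ := fun i => P.map (R i) with hμi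
    haveI hprob : ∀ i : Fin N, IsProbabilityMeasure (μi i) :=
      fun i => Measure.isProbabilityMeasure_map (hmeas i).aemeasurable
    haveI : IsProbabilityMeasure (Measure.pi μi) := by
      constructor; rw [Measure.pi_univ]; simp
    have hmap : P.map X = Measure.pi μi := by
      refine (Measure.pi_eq (μ := μi) fun s hs => ?_).symm
      rw [Measure.map_apply hXm (MeasurableSet.univ_pi hs)]
      set S : ℕ → Set ℝ := fun i => if h : i < N then s ⟨i, h⟩ else Set.univ with hS
      have hSm : ∀ i ∈ Finset.range N, MeasurableSet (S i) := by
        intro i _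
        by_cases h : i < N
        · simp only [hS, dif_pos h]; exact hs _
        · simp only [hS, dif_neg h]; exact MeasurableSet.univ
      have hpre : X ⁻¹' (Set.univ.pi s) = ⋂ i ∈ Finset.range N, R i ⁻¹' S i := by
        ext ω
        simp only [Set.mem_preimage, Set.mem_pi, Set.mem_univ, forall_true_left,
          Set.mem_iInter, Finset.mem_range]
        constructor
        · intro h i hi
          simp only [hS, dif_pos hi]
          exact h ⟨i, hi⟩
        · intro h i
          have := h (i : ℕ) i.isLt
          simpa only [hS, dif_pos i.isLt, Fin.eta] using this
      rw [hpre, hindep.measure_inter_preimage_eq_mul (Finset.range N) hSm,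
        ← Fin.prod_univ_eq_prod_range (fun i => P (R i ⁻¹' S i)) N]
      refine Finset.prod_congr rfl fun i _ => ?_
      simp only [hμi]
      rw [Measure.map_apply (hmeas i) (hs i)]
      congr 1
      simp only [hS, dif_pos i.isLt, Fin.eta]
    set C : ℕ → Set (Fin N → ℝ) := fun n =>
      ⋃ i : Fin N, ⋃ (_ : (i : ℕ) ≤ n),
        {x : Fin N → ℝ | ((u (n + 1) - u i : ℕ) : ℝ) ≤ x i} with hC
    have hCm : ∀ n, MeasurableSet (C n) := fun n =>
      MeasurableSet.iUnion fun i => MeasurableSet.iUnion fun _ =>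
        measurableSet_le measurable_const (measurable_pi_apply i)
    have hCu : ∀ n, ∀ x y : Fin N → ℝ, x ≤ y → x ∈ C n → y ∈ C n := by
      intro n x y hxy hx
      simp only [hC, Set.mem_iUnion, Set.mem_setOf_eq] at hx ⊢
      obtain ⟨i, hi, hix⟩ := hx
      exact ⟨i, hi, hix.trans (hxy i)⟩
    have hU : MeasurableSet (⋂ n ∈ Finset.range N, C n) :=
      MeasurableSet.biInter (Finset.range N).countable_toSet fun n _ => hCm n
    have hTX : T N = X ⁻¹' (⋂ n ∈ Finset.range N, C n) := by
      ext ω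
      simp only [hT, hB, hC, hX, Set.mem_iInter, Finset.mem_range, Set.mem_preimage,
        Set.mem_iUnion, Set.mem_setOf_eq, Finset.mem_range]
      constructor
      · intro h n hn
        obtain ⟨i, hi, hix⟩ := h n hn
        exact ⟨⟨i, by omega⟩, by simpa using Nat.lt_succ_iff.mp hi, hix⟩
      · intro h n hn
        obtain ⟨i, hi, hix⟩ := h n hn
        exact ⟨(i : ℕ), by omega, hix⟩
    have hPT : P (T N) = Measure.pi μi (⋂ n ∈ Finset.range N, C n) := by
      rw [hTX, ← Measure.map_apply hXm hU, hmap]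
    have hfac : ∀ n, n < N → 1 - q n ≤ Measure.pi μi (C n) := by
      intro n hnN'
      set s : Fin N → Set ℝ := fun i =>
        if (i : ℕ) ≤ n then Set.Iio (((u (n + 1) - u i : ℕ)) : ℝ) else Set.univ with hs
      have hsub : (C n)ᶜ ⊆ Set.univ.pi s := by
        intro x hx
        simp only [hC, Set.mem_compl_iff, Set.mem_iUnion, Set.mem_setOf_eq,
          not_exists, not_le] at hx
        intro i _
        simp only [hs]
        by_cases h : (i : ℕ) ≤ n
        · rw [if_pos h]
          exact Set.mem_Iio.2 (hx i h)
        · rw [if_neg h]; trivial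
      set g : ℕ → ℝ≥0∞ := fun i =>
        if i ≤ n then P {ω | R i ω < (((n + 1 - i) * m : ℕ) : ℝ)} else 1 with hg
      have hterm : ∀ i : Fin N, μi i (s i) ≤ g (i : ℕ) := by
        intro i
        by_cases h : (i : ℕ) ≤ n
        · simp only [hs, hg, if_pos h, hμi]
          rw [Measure.map_apply (hmeas i) measurableSet_Iio]
          refine measure_mono fun ω hω => ?_
          simp only [Set.mem_preimage, Set.mem_Iio] at hω
          simp only [Set.mem_setOf_eq]
          refine lt_of_lt_of_le hω ?_
          exact_mod_cast Nat.cast_le.mpr (hub n i h)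
        · simp only [hs, hg, if_neg h]
          exact prob_le_one
      have hq' : ∏ i ∈ Finset.range (n + 1),
          P {ω | R i ω < (((n + 1 - i) * m : ℕ) : ℝ)} = q n := by
        set f : ℕ → ℝ≥0∞ := fun i => P {ω | R i ω < (((n + 1 - i) * m : ℕ) : ℝ)} with hf
        have hrefl := Finset.prod_range_reflect f (n + 1)
        simp only [Nat.add_sub_cancel] at hrefl
        rw [← hrefl, hq]
        refine Finset.prod_congr rfl fun j hj => ?_
        have hj' : j ≤ n := Nat.lt_succ_iff.mp (Finset.mem_range.mp hj)
        have hjj : n + 1 - (n - j) = j + 1 := by omega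
        simp only [hf, hjj]
      have hcompl : Measure.pi μi ((C n)ᶜ) ≤ q n := by
        refine le_trans (measure_mono hsub) ?_
        rw [Measure.pi_pi]
        calc ∏ i : Fin N, μi i (s i) ≤ ∏ i : Fin N, g (i : ℕ) :=
              Finset.prod_le_prod' fun i _ => hterm i
          _ = ∏ i ∈ Finset.range N, g i := Fin.prod_univ_eq_prod_range g N
          _ ≤ ∏ i ∈ Finset.range (n + 1),
                P {ω | R i ω < (((n + 1 - i) * m : ℕ) : ℝ)} := by
              have hnN : n + 1 ≤ N := hnN'
              rw [← Finset.prod_range_mul_prod_Ico g hnN]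
              have h2 : ∏ i ∈ Finset.Ico (n + 1) N, g i = 1 := by
                refine Finset.prod_eq_one fun i hi => ?_
                have : ¬ i ≤ n := by
                  have := (Finset.mem_Ico.mp hi).1; omega
                simp [hg, this]
              rw [h2, mul_one]
              refine le_of_eq (Finset.prod_congr rfl fun i hi => ?_)
              have : i ≤ n := Nat.lt_succ_iff.mp (Finset.mem_range.mp hi)
              simp [hg, this]
          _ = q n := hq'
      calc 1 - q n ≤ 1 - Measure.pi μi ((C n)ᶜ) := tsub_le_tsub_left hcompl 1
        _ = 1 - (1 - Measure.pi μi (C n)) := by rw [prob_compl_eq_one_sub (hCm n)]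
        _ = Measure.pi μi (C n) := ENNReal.sub_sub_cancel ENNReal.one_ne_top prob_le_one
    calc ∏ j ∈ Finset.range N, (1 - q j)
        ≤ ∏ j ∈ Finset.range N, Measure.pi μi (C j) :=
          Finset.prod_le_prod' fun j hj => hfac j (Finset.mem_range.mp hj)
      _ ≤ Measure.pi μi (⋂ n ∈ Finset.range N, C n) :=
          firework_harris_iInter N μi hprob C hCm hCu N
      _ = P (T N) := hPT.symm
  rw [ge_iff_le, hPV]
  refine le_iInf fun N => ?_
  exact le_trans (firework_tprod_le (fun j => 1 - q j) (fun j => tsub_le_self) N) (key N)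
end

section
/- For the homogeneous Reverse Firework Process, if R has finite expectation (equivalently, ∑_{n=1}^{∞} P(R ≥ n) < ∞), then P(S) = 0. -/
open MeasureTheory ProbabilityTheory Filter
open scoped ENNReal Topology

private lemma ennreal_one_sub_add_le (a b : ℝ≥0∞) : 1 - (a + b) ≤ (1 - a) * (1 - b) := by
  rcases le_or_gt 1 a with ha | ha
  · rw [tsub_eq_zero_of_le (ha.trans le_self_add)]
    exact zero_le
  rcases le_or_gt 1 b with hb | hb
  · rw [tsub_eq_zero_of_le (hb.trans le_add_self)]
    exact zero_le
  rw [tsub_le_iff_right]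
  calc (1:ℝ≥0∞) = (1 - a) * ((1 - b) + b) + a := by
        rw [tsub_add_cancel_of_le hb.le, mul_one, tsub_add_cancel_of_le ha.le]
    _ = (1 - a) * (1 - b) + ((1 - a) * b + a) := by ring
    _ ≤ (1 - a) * (1 - b) + (b + a) := by
        exact add_le_add_right (add_le_add_left
          (mul_le_of_le_one_left zero_le tsub_le_self) a) _
    _ = (1 - a) * (1 - b) + (a + b) := by ring

private lemma ennreal_one_sub_sum_le_prod (s : Finset ℕ) (x : ℕ → ℝ≥0∞) :
    1 - ∑ j ∈ s, x j ≤ ∏ j ∈ s, (1 - x j) := by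
  classical
  induction s using Finset.induction_on with
  | empty => simp
  | @insert a s ha ih =>
    rw [Finset.sum_insert ha, Finset.prod_insert ha]
    exact (ennreal_one_sub_add_le _ _).trans (mul_le_mul_right ih _)

/-- **Homogeneous Reverse Firework Process.** If `R` has finite expectation,
i.e. `∑_{n=1}^∞ P(R ≥ n) < ∞`, then `P(S) = 0`. -/
theorem reverse_firework_homogeneous_death
    {Ω : Type*} [MeasurableSpace Ω] (P : Measure Ω) [IsProbabilityMeasure P]
    (R : ℕ → Ω → ℕ) (R₀ : Ω → ℕ)
    (hmeas : ∀ i, Measurable (R i)) (hmeas₀ : Measurable R₀)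
    (hindep : iIndepFun R P)
    (hid : ∀ i, IdentDistrib (R i) R₀ P P)
    (h0 : 0 < P {ω | R₀ ω < 1}) (h1 : P {ω | R₀ ω < 1} < 1)
    (S : Set Ω)
    (hS : S = ⋂ (n : ℕ), ⋃ (j : ℕ) (_ : 1 ≤ j), {ω | j ≤ R (n + j) ω})
    (hE : (∑' n : ℕ, P {ω | n + 1 ≤ R₀ ω}) ≠ ⊤) :
    P S = 0 := by
  classical
  have hNat : ∀ s : Set ℕ, MeasurableSet s := fun s => .of_discrete
  set p : ℕ → ℝ≥0∞ := fun j => P {ω | j ≤ R₀ ω} with hpdef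
  have hPk : ∀ (k j : ℕ), P {ω | j ≤ R k ω} = p j := fun k j =>
    (hid k).measure_mem_eq (s := {x | j ≤ x}) (hNat _)
  have hfac : ∀ (k j : ℕ), P {ω | R k ω < j} = 1 - p j := by
    intro k j
    have h1 : {ω | R k ω < j} = {ω | j ≤ R k ω}ᶜ := by
      ext ω; simp [Set.mem_setOf_eq, not_le]
    have hms : MeasurableSet {ω | j ≤ R k ω} := (hmeas k) (hNat {x | j ≤ x})
    rw [h1, prob_compl_eq_one_sub hms, hPk]
  -- `p 1 < 1`
  have hcompl0 : P {ω | R₀ ω < 1} = 1 - p 1 := by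
    have h1 : {ω | R₀ ω < 1} = {ω | 1 ≤ R₀ ω}ᶜ := by
      ext ω; simp [Set.mem_setOf_eq, not_le]
    have hms : MeasurableSet {ω | 1 ≤ R₀ ω} := hmeas₀ (hNat {x | 1 ≤ x})
    rw [h1, prob_compl_eq_one_sub hms]
  have hp1lt : p 1 < 1 := tsub_pos_iff_lt.mp (hcompl0 ▸ h0)
  have hpm : ∀ {j₁ j₂ : ℕ}, j₁ ≤ j₂ → p j₂ ≤ p j₁ := fun h =>
    measure_mono fun ω hω => le_trans h hω
  have hfacpos : ∀ j : ℕ, 1 ≤ j → 0 < 1 - p j := fun j hj =>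
    tsub_pos_iff_lt.mpr (lt_of_le_of_lt (hpm hj) hp1lt)
  -- choose J₀ with small tail
  have htail : Tendsto (fun i => ∑' k, p (k + i + 1)) atTop (𝓝 0) := by
    have h := ENNReal.tendsto_sum_nat_add (fun n => p (n + 1)) hE
    exact h
  obtain ⟨J₀, hJ₀tail, hJ₀1⟩ :=
    ((htail.eventually_lt_const (by norm_num : (0:ℝ≥0∞) < 2⁻¹)).and
      (eventually_ge_atTop 1)).exists
  have htailsum : ∀ L : ℕ, ∑ j ∈ Finset.Ioc J₀ L, p j ≤ 2⁻¹ := by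
    intro L
    have h1 : Finset.Ioc J₀ L = Finset.Ico (J₀+1) (L+1) := by
      rw [← Finset.Icc_add_one_left_eq_Ioc, Finset.Ico_add_one_right_eq_Icc]
    rw [h1, Finset.sum_Ico_eq_sum_range]
    refine le_trans ?_ hJ₀tail.le
    calc ∑ k ∈ Finset.range (L + 1 - (J₀+1)), p (J₀ + 1 + k)
        = ∑ k ∈ Finset.range (L + 1 - (J₀+1)), p (k + J₀ + 1) :=
          Finset.sum_congr rfl fun k _ => by rw [show J₀ + 1 + k = k + J₀ + 1 by ring]
      _ ≤ ∑' k, p (k + J₀ + 1) := ENNReal.sum_le_tsum _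
  -- block events
  set B : ℕ → Set Ω := fun i => ⋂ j ∈ Finset.Ioc 0 (2^i), {ω | R (2^i + j) ω < j} with hBdef
  have hBval : ∀ i, P (B i) = ∏ j ∈ Finset.Ioc 0 (2^i), (1 - p j) := by
    intro i
    have hre : B i = ⋂ k ∈ Finset.Ioc (2^i) (2^i + 2^i), {ω | R k ω < k - 2^i} := by
      ext ω
      simp only [hBdef, Set.mem_iInter, Finset.mem_Ioc, Set.mem_setOf_eq]
      constructor
      · intro h k hk
        have h2 := h (k - 2^i) ⟨by omega, by omega⟩
        rw [show 2^i + (k - 2^i) = k by omega] at h2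
        exact h2
      · intro h j hj
        have h2 := h (2^i + j) ⟨by omega, by omega⟩
        rwa [show 2^i + j - 2^i = j by omega] at h2
    rw [hre, hindep.meas_biInter (s := fun k => {ω | R k ω < k - 2^i}) (fun k _ =>
      MeasurableSpace.measurableSet_comap.mpr ⟨{x | x < k - 2^i}, hNat _, rfl⟩)]
    rw [show Finset.Ioc (2^i) (2^i + 2^i)
        = (Finset.Ioc 0 (2^i)).map (addLeftEmbedding (2^i)) by
          rw [Finset.map_add_left_Ioc]; simp, Finset.prod_map]
    refine Finset.prod_congr rfl fun j hj => ?_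
    simp only [addLeftEmbedding_apply]
    rw [show 2^i + j - 2^i = j by omega]
    exact hfac _ _
  have hBamb : ∀ i, MeasurableSet (B i) := fun i =>
    Finset.measurableSet_biInter _ fun j _ => (hmeas _) (hNat {x | x < j})
  -- lower bound on block probabilities
  set c : ℝ≥0∞ := (∏ j ∈ Finset.Ioc 0 J₀, (1 - p j)) * 2⁻¹ with hcdef
  have hcpos : 0 < c := by
    refine ENNReal.mul_pos ?_ (by norm_num)
    exact (Finset.prod_ne_zero_iff.mpr fun j hj =>
      (hfacpos j (Finset.mem_Ioc.mp hj).1).ne')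
  have hcle : ∀ i : ℕ, J₀ ≤ 2^i → c ≤ P (B i) := by
    intro i hJ
    have hdisj : Disjoint (Finset.Ioc 0 J₀) (Finset.Ioc J₀ (2^i)) := by
      rw [Finset.disjoint_left]
      intro a ha ha'
      rw [Finset.mem_Ioc] at ha ha'
      omega
    rw [hBval i, ← Finset.Ioc_union_Ioc_eq_Ioc (Nat.zero_le J₀) hJ,
      Finset.prod_union hdisj]
    refine mul_le_mul_right ?_ _
    refine le_trans ?_ (ennreal_one_sub_sum_le_prod _ _)
    have h12 : (1:ℝ≥0∞) - 2⁻¹ = 2⁻¹ :=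
      ENNReal.sub_eq_of_eq_add (by norm_num) ENNReal.inv_two_add_inv_two.symm
    calc (2:ℝ≥0∞)⁻¹ = 1 - 2⁻¹ := h12.symm
      _ ≤ 1 - ∑ j ∈ Finset.Ioc J₀ (2^i), p j := tsub_le_tsub_left (htailsum (2^i)) 1
  -- independence machinery
  set mσ : ℕ → MeasurableSpace Ω := fun k =>
    MeasurableSpace.comap (R k) inferInstance with hmσdef
  have h_le : ∀ k, mσ k ≤ ‹MeasurableSpace Ω› := fun k => (hmeas k).comap_le
  have hii : iIndep mσ P := hindep.iIndep
  have hBσ : ∀ (i : ℕ) (mA : MeasurableSpace Ω),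
      (∀ k, 2^i < k → k ≤ 2^i + 2^i → mσ k ≤ mA) → MeasurableSet[mA] (B i) := by
    intro i mA hsub
    refine @Finset.measurableSet_biInter Ω ℕ mA _ (Finset.Ioc 0 (2^i)) fun j hj => ?_
    rw [Finset.mem_Ioc] at hj
    refine hsub (2^i + j) (by omega) (by omega) _ ?_
    exact MeasurableSpace.measurableSet_comap.mpr ⟨{x | x < j}, hNat _, rfl⟩
  -- key induction
  have hkey : ∀ (m M : ℕ), J₀ ≤ 2^m →
      P (⋂ i ∈ Finset.Ico m (m + M), (B i)ᶜ) ≤ (1 - c)^M := by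
    intro m M hm
    induction M with
    | zero => simp
    | succ M ih =>
      have hsplit : Finset.Ico m (m + (M+1)) = insert (m+M) (Finset.Ico m (m+M)) := by
        rw [show m + (M+1) = (m+M)+1 from rfl,
          Nat.Ico_succ_right_eq_insert_Ico (Nat.le_add_right m M)]
      rw [hsplit, Finset.set_biInter_insert]
      have hIndep : Indep (⨆ k ∈ Set.Iic (2^(m+M)), mσ k)
          (⨆ k ∈ Set.Ioi (2^(m+M)), mσ k) P :=
        indep_iSup_of_disjoint h_le hii (Set.Iic_disjoint_Ioi le_rfl)
      have hCmeas : MeasurableSet[⨆ k ∈ Set.Iic (2^(m+M)), mσ k]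
          (⋂ i ∈ Finset.Ico m (m+M), (B i)ᶜ) := by
        refine @Finset.measurableSet_biInter Ω ℕ _ _ (Finset.Ico m (m+M)) fun i hi => ?_
        rw [Finset.mem_Ico] at hi
        refine MeasurableSet.compl ?_
        refine hBσ i _ fun k hk1 hk2 => ?_
        have hkle : k ≤ 2^(m+M) := by
          have h2 : (2:ℕ)^i + 2^i ≤ 2^(m+M) := by
            have h3 : (2:ℕ)^(i+1) ≤ 2^(m+M) := Nat.pow_le_pow_right (by norm_num) (by omega)
            rw [pow_succ] at h3
            omega
          omega
        exact le_iSup₂ (f := fun k (_ : k ∈ Set.Iic (2^(m+M))) => mσ k) k hkle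
      have hBmeas' : MeasurableSet[⨆ k ∈ Set.Ioi (2^(m+M)), mσ k] ((B (m+M))ᶜ) := by
        refine MeasurableSet.compl ?_
        refine hBσ (m+M) _ fun k hk1 hk2 => ?_
        exact le_iSup₂ (f := fun k (_ : k ∈ Set.Ioi (2^(m+M))) => mσ k) k hk1
      rw [Set.inter_comm, (Indep_iff _ _ _).1 hIndep _ _ hCmeas hBmeas']
      have h1 : P ((B (m+M))ᶜ) ≤ 1 - c := by
        rw [prob_compl_eq_one_sub (hBamb _)]
        refine tsub_le_tsub_left (hcle (m+M) ?_) 1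
        exact hm.trans (Nat.pow_le_pow_right (by norm_num) (Nat.le_add_right m M))
      calc P (⋂ i ∈ Finset.Ico m (m+M), (B i)ᶜ) * P ((B (m+M))ᶜ)
          ≤ (1-c)^M * (1-c) := mul_le_mul' ih h1
        _ = (1-c)^(M+1) := (pow_succ _ _).symm
  -- death events have probability zero
  have hdeath : ∀ m : ℕ, P (⋂ i ∈ Set.Ici (J₀ + m), (B i)ᶜ) = 0 := by
    intro m
    have hm' : J₀ ≤ 2^(J₀ + m) :=
      (Nat.lt_two_pow_self (n := J₀)).le.trans (Nat.pow_le_pow_right (by norm_num) (Nat.le_add_right _ _))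
    refine le_antisymm ?_ zero_le
    have hlim : Tendsto (fun M => (1-c)^M) atTop (𝓝 0) :=
      ENNReal.tendsto_pow_atTop_nhds_zero_of_lt_one
        (ENNReal.sub_lt_self ENNReal.one_ne_top one_ne_zero hcpos.ne')
    refine ge_of_tendsto' hlim fun M => ?_
    refine le_trans (measure_mono ?_) (hkey (J₀ + m) M hm')
    intro ω hω
    refine Set.mem_iInter₂.2 fun i hi => ?_
    exact Set.mem_iInter₂.1 hω i (Finset.mem_Ico.1 hi).1
  -- Borel–Cantelli part
  set A : ℕ → Set Ω := fun k => {ω | k ≤ 2 * R k ω} with hAdef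
  have hAk : ∀ k, P (A k) = p ((k+1)/2) := by
    intro k
    have h1 : A k = R k ⁻¹' {x | (k+1)/2 ≤ x} := by
      ext ω
      simp only [hAdef, Set.mem_setOf_eq, Set.mem_preimage]
      omega
    rw [h1, (hid k).measure_mem_eq (hNat _)]
    rfl
  have hAsum : ∑' k, P (A k) ≠ ⊤ := by
    have h2 : ∑' k, P (A k) = ∑' k, p ((k+1)/2) := tsum_congr hAk
    rw [h2, ← tsum_even_add_odd (f := fun k => p ((k+1)/2)) ENNReal.summable ENNReal.summable]
    have he : ∀ k:ℕ, p ((2*k+1)/2) = p k := fun k => by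
      rw [show (2*k+1)/2 = k by omega]
    have ho : ∀ k:ℕ, p ((2*k+1+1)/2) = p (k+1) := fun k => by
      rw [show (2*k+1+1)/2 = k+1 by omega]
    rw [tsum_congr he, tsum_congr ho, tsum_eq_zero_add' ENNReal.summable]
    refine ENNReal.add_ne_top.2 ⟨ENNReal.add_ne_top.2 ⟨?_, hE⟩, hE⟩
    exact measure_ne_top P _
  have hN0 : P (limsup A atTop) = 0 := measure_limsup_atTop_eq_zero hAsum
  -- inclusion
  have hSsub : S ⊆ limsup A atTop ∪ ⋃ m : ℕ, ⋂ i ∈ Set.Ici (J₀ + m), (B i)ᶜ := by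
    intro ω hω
    rw [Set.mem_union]
    by_cases hN : ω ∈ limsup A atTop
    · exact Or.inl hN
    right
    rw [mem_limsup_iff_frequently_mem, Filter.not_frequently] at hN
    obtain ⟨K, hK⟩ := eventually_atTop.1 hN
    refine Set.mem_iUnion.2 ⟨K, Set.mem_iInter₂.2 fun i hi => ?_⟩
    intro hB
    rw [hS] at hω
    have h2 := Set.mem_iInter.1 hω (2^i)
    simp only [Set.mem_iUnion, Set.mem_setOf_eq] at h2
    obtain ⟨j, hj1, hjR⟩ := h2
    rcases le_or_gt j (2^i) with hle | hgt
    · have h3 := Set.mem_iInter₂.1 hB j (Finset.mem_Ioc.2 ⟨hj1, hle⟩)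
      simp only [Set.mem_setOf_eq] at h3
      omega
    · have hIci : J₀ + K ≤ i := hi
      have hKk : K ≤ 2^i + j := by
        have h3 : i < 2^i := Nat.lt_two_pow_self
        omega
      have h4 := hK (2^i + j) hKk
      simp only [hAdef, Set.mem_setOf_eq, not_le] at h4
      omega
  have hfinal : P S ≤ 0 := by
    calc P S ≤ P (limsup A atTop ∪ ⋃ m : ℕ, ⋂ i ∈ Set.Ici (J₀ + m), (B i)ᶜ) :=
          measure_mono hSsub
      _ ≤ P (limsup A atTop) + P (⋃ m : ℕ, ⋂ i ∈ Set.Ici (J₀ + m), (B i)ᶜ) :=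
          measure_union_le _ _
      _ = 0 := by rw [hN0, measure_iUnion_null fun m => hdeath m, add_zero]
  exact le_antisymm hfinal zero_le
end

section
/- For the heterogeneous Reverse Firework Process, ∑_{k=1}^{∞} P(R_{n+k} ≥ k) = ∞ for every n ∈ ℕ if and only if P(S) = 1. -/
open MeasureTheory ProbabilityTheory Filter
open scoped ENNReal

/-- Independence of the reindexed preimage sets. -/
lemma rfw_aux_indep {Ω : Type*} [MeasurableSpace Ω] (P : Measure Ω) [IsProbabilityMeasure P]
    (R : ℕ → Ω → ℕ) (hmeas : ∀ i, Measurable (R i))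
    (hindep : iIndepFun R P) (n : ℕ)
    (A : ℕ → Set ℕ) (hA : ∀ k, MeasurableSet (A k)) :
    iIndepSet (fun k => R (n + (k + 1)) ⁻¹' A k) P := by
  rw [iIndepSet_iff_meas_biInter (fun k => (hmeas _) (hA k))]
  intro s
  have hinj : Function.Injective (fun k => n + (k + 1)) := by
    intro a b h; simpa using h
  have h := hindep.measure_inter_preimage_eq_mul
    (S := s.image (fun k => n + (k + 1))) (sets := fun i => A (i - (n + 1)))
    (fun i _ => hA _)
  rw [Finset.set_biInter_finset_image, Finset.prod_image (fun a _ b _ h => hinj h)] at h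
  have hsub : ∀ y : ℕ, n + (y + 1) - (n + 1) = y := fun y => by omega
  simp only [hsub] at h
  exact h

/-- **Heterogeneous Reverse Firework Process.**
`∑_{k=1}^∞ P(R_{n+k} ≥ k) = ∞` for all `n` if and only if `P(S) = 1`. -/
theorem reverse_firework_heterogeneous_criterion
    {Ω : Type*} [MeasurableSpace Ω] (P : Measure Ω) [IsProbabilityMeasure P]
    (R : ℕ → Ω → ℕ)
    (hmeas : ∀ i, Measurable (R i))
    (hindep : iIndepFun R P)
    (h0 : ∀ n, 0 < P {ω | R n ω < 1}) (h1 : ∀ n, P {ω | R n ω < 1} < 1)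
    (S : Set Ω)
    (hS : S = ⋂ (n : ℕ), ⋃ (j : ℕ) (_ : 1 ≤ j), {ω | j ≤ R (n + j) ω}) :
    (∀ n : ℕ, (∑' k : ℕ, P {ω | k + 1 ≤ R (n + (k + 1)) ω}) = ⊤) ↔ P S = 1 := by
  -- basic sets
  set E : ℕ → ℕ → Set Ω := fun n k => {ω | k + 1 ≤ R (n + (k + 1)) ω} with hE
  have hEpre : ∀ n k, E n k = R (n + (k + 1)) ⁻¹' Set.Ici (k + 1) := fun n k => rfl
  have hEmeas : ∀ n k, MeasurableSet (E n k) := fun n k => by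
    rw [hEpre]; exact (hmeas _) measurableSet_Ici
  have hEindep : ∀ n, iIndepSet (E n) P := by
    intro n
    have := rfw_aux_indep P R hmeas hindep n (fun k => Set.Ici (k + 1))
      (fun k => measurableSet_Ici)
    simpa [← hEpre] using this
  set F : ℕ → ℕ → Set Ω := fun n k => (E n k)ᶜ with hF
  have hFmeas : ∀ n k, MeasurableSet (F n k) := fun n k => (hEmeas n k).compl
  have hFindep : ∀ n, iIndepSet (F n) P := by
    intro n
    have := rfw_aux_indep P R hmeas hindep n (fun k => (Set.Ici (k + 1))ᶜ)
      (fun k => measurableSet_Ici.compl)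
    have heq : (fun k => R (n + (k + 1)) ⁻¹' (Set.Ici (k + 1))ᶜ) = F n := by
      funext k
      show R (n + (k + 1)) ⁻¹' (Set.Ici (k + 1))ᶜ = (E n k)ᶜ
      rw [hEpre]
      rfl
    rwa [heq] at this
  -- the union events
  set U : ℕ → Set Ω := fun n => ⋃ (j : ℕ) (_ : 1 ≤ j), {ω | j ≤ R (n + j) ω} with hU
  have hUmeas : ∀ n, MeasurableSet (U n) := by
    intro n
    refine MeasurableSet.iUnion fun j => MeasurableSet.iUnion fun _ => ?_
    exact (hmeas _) measurableSet_Ici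
  have hUcompl : ∀ n, (U n)ᶜ = ⋂ k, F n k := by
    intro n
    ext ω
    simp only [hU, hF, hE, Set.mem_compl_iff, Set.mem_iUnion, Set.mem_iInter, Set.mem_setOf_eq,
      not_exists, not_le]
    constructor
    · intro h k; exact h (k + 1) (by omega)
    · intro h j hj
      have := h (j - 1)
      have hj' : j - 1 + 1 = j := by omega
      rwa [hj'] at this
  have hSmeas : MeasurableSet S := by
    rw [hS]; exact MeasurableSet.iInter fun n => hUmeas n
  constructor
  · -- divergence implies survival
    intro hdiv
    have hU1 : ∀ n, P (U n) = 1 := by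
      intro n
      have hlim := ProbabilityTheory.measure_limsup_eq_one (μ := P) (s := E n)
        (hEmeas n) (hEindep n) (hdiv n)
      have hsub : limsup (E n) atTop ⊆ U n := by
        refine Set.Subset.trans (limsup_le_iSup.trans_eq rfl : limsup (E n) atTop ⊆ ⋃ k, E n k) ?_
        refine Set.iUnion_subset fun k => ?_
        intro ω hω
        exact Set.mem_iUnion.2 ⟨k + 1, Set.mem_iUnion.2 ⟨by omega, hω⟩⟩
      exact le_antisymm prob_le_one (hlim ▸ measure_mono hsub)
    have hScompl : P Sᶜ = 0 := by
      rw [hS, Set.compl_iInter]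
      refine measure_iUnion_null fun n => ?_
      rw [measure_compl (hUmeas n) (measure_ne_top _ _), hU1 n]
      simp
    rwa [prob_compl_eq_zero_iff hSmeas] at hScompl
  · -- survival implies divergence
    intro hPS n
    by_contra hne
    -- P (U n) = 1 since S ⊆ U n
    have hU1 : P (U n) = 1 := by
      have hsub : S ⊆ U n := by rw [hS]; exact Set.iInter_subset _ n
      exact le_antisymm prob_le_one (hPS ▸ measure_mono hsub)
    have hFinter : P (⋂ k, F n k) = 0 := by
      rw [← hUcompl, measure_compl (hUmeas n) (measure_ne_top _ _), hU1]
      simp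
    -- pick J with tail sum < 1
    have htail := ENNReal.tendsto_sum_nat_add (fun k => P (E n k)) hne
    have hev : ∀ᶠ J in atTop, (∑' k, P (E n (k + J))) < 1 := by
      exact htail.eventually_lt_const (by norm_num)
    obtain ⟨J, hJ⟩ := hev.exists
    -- block independence
    set X : Set Ω := ⋂ k ∈ Finset.range J, F n k with hX
    set Y : Set Ω := ⋂ k, F n (k + J) with hY
    have hXY : (⋂ k, F n k) = X ∩ Y := by
      ext ω
      simp only [hX, hY, Set.mem_iInter, Set.mem_inter_iff, Finset.mem_range]
      constructor
      · exact fun h => ⟨fun k _ => h k, fun k => h (k + J)⟩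
      · rintro ⟨h1, h2⟩ k
        rcases lt_or_ge k J with hk | hk
        · exact h1 k hk
        · have := h2 (k - J)
          rwa [Nat.sub_add_cancel hk] at this
    have hindepXY : P (X ∩ Y) = P X * P Y := by
      have hblock := (hFindep n).indep_generateFrom_of_disjoint (hFmeas n)
        {k | k < J} {k | J ≤ k} (by
          rw [Set.disjoint_left]
          intro k hk1 hk2
          simp only [Set.mem_setOf_eq] at hk1 hk2
          omega)
      rw [Indep_iff] at hblock
      refine hblock X Y ?_ ?_
      · refine MeasurableSet.biInter (Set.to_countable _) fun k hk => ?_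
        exact MeasurableSpace.measurableSet_generateFrom ⟨k, Finset.mem_range.mp hk, rfl⟩
      · refine MeasurableSet.iInter fun k => ?_
        exact MeasurableSpace.measurableSet_generateFrom ⟨k + J, by simp, rfl⟩
    have hXpos : 0 < P X := by
      rw [hX, (hFindep n).meas_biInter]
      rw [pos_iff_ne_zero, Finset.prod_ne_zero_iff]
      intro k _
      have hsub : {ω | R (n + (k + 1)) ω < 1} ⊆ F n k := by
        intro ω hω
        simp only [hF, hE, Set.mem_compl_iff, Set.mem_setOf_eq, not_le]
        exact lt_of_lt_of_le hω (by omega)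
      exact (lt_of_lt_of_le (h0 (n + (k + 1))) (measure_mono hsub)).ne'
    have hYpos : 0 < P Y := by
      have hYc : P Yᶜ < 1 := by
        have : Yᶜ = ⋃ k, E n (k + J) := by
          rw [hY, Set.compl_iInter]
          simp [hF]
        rw [this]
        exact lt_of_le_of_lt (measure_iUnion_le _) hJ
      have := measure_compl (μ := P) (s := Y) (MeasurableSet.iInter fun k => hFmeas n _)
        (measure_ne_top _ _)
      -- P Yᶜ = 1 - P Y < 1 hence P Y > 0
      by_contra h
      push_neg at h
      have hY0 : P Y = 0 := le_antisymm h zero_le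
      rw [this, hY0, tsub_zero, measure_univ] at hYc
      exact lt_irrefl _ hYc
    rw [hXY, hindepXY] at hFinter
    exact absurd hFinter (ENNReal.mul_pos hXpos.ne' hYpos.ne').ne'
end

section
/- For the heterogeneous Reverse Firework Process, if ∑_{n=1}^{∞} ∏_{k=1}^{∞} P(R_{n+k} < k) < ∞, then P(S) > 0. -/
open MeasureTheory ProbabilityTheory Filter
open scoped ENNReal


lemma le_tprod_of_le_prod (f : ℕ → ℝ≥0∞) (hf : ∀ k, f k ≤ 1) (C : ℝ≥0∞)
    (h : ∀ s : Finset ℕ, C ≤ ∏ k ∈ s, f k) : C ≤ ∏' k, f k := by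
  have hanti : Antitone (fun s : Finset ℕ => ∏ k ∈ s, f k) := by
    intro s t hst
    calc ∏ k ∈ t, f k = (∏ k ∈ t \ s, f k) * ∏ k ∈ s, f k := (Finset.prod_sdiff hst).symm
      _ ≤ 1 * ∏ k ∈ s, f k := by
          gcongr
          exact Finset.prod_le_one (fun _ _ => zero_le) (fun k _ => hf k)
      _ = ∏ k ∈ s, f k := one_mul _
  have hp : HasProd f (⨅ s : Finset ℕ, ∏ k ∈ s, f k) := tendsto_atTop_iInf hanti
  rw [hp.tprod_eq]
  exact le_iInf h

/-- **Heterogeneous Reverse Firework Process.**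
If `∑_{n=1}^∞ ∏_{k=1}^∞ P(R_{n+k} < k) < ∞` then `P(S) > 0`. -/
theorem reverse_firework_heterogeneous_survival
    {Ω : Type*} [MeasurableSpace Ω] (P : Measure Ω) [IsProbabilityMeasure P]
    (R : ℕ → Ω → ℕ)
    (hmeas : ∀ i, Measurable (R i))
    (hindep : iIndepFun R P)
    (h0 : ∀ n, 0 < P {ω | R n ω < 1}) (h1 : ∀ n, P {ω | R n ω < 1} < 1)
    (S : Set Ω)
    (hS : S = ⋂ (n : ℕ), ⋃ (j : ℕ) (_ : 1 ≤ j), {ω | j ≤ R (n + j) ω})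
    (hsum : (∑' n : ℕ, ∏' k : ℕ,
      P {ω | R ((n + 1) + (k + 1)) ω < k + 1}) ≠ ⊤) :
    0 < P S := by
  classical
  set f : ℕ → ℝ≥0∞ := fun n => ∏' k : ℕ, P {ω | R ((n + 1) + (k + 1)) ω < k + 1} with hf
  -- measurability of the basic sets
  have hmeasset : ∀ i (A : Set ℕ), MeasurableSet[MeasurableSpace.comap (R i) ⊤] (R i ⁻¹' A) :=
    fun i A => ⟨A, trivial, rfl⟩
  have hmeasset' : ∀ i (A : Set ℕ), MeasurableSet (R i ⁻¹' A) :=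
    fun i A => (hmeas i) trivial
  -- Step A: choose N with tail sum < 1
  obtain ⟨N, hN⟩ : ∃ N, (∑' m, f (m + N)) < 1 := by
    have := ENNReal.tendsto_sum_nat_add f hsum
    have := (this.eventually (Filter.Tendsto.eventually_lt_const (by norm_num : (0:ℝ≥0∞) < 1) tendsto_id)).exists
    · exact this
  -- the events
  set B : ℕ → Set Ω := fun n => ⋃ (j : ℕ) (_ : 1 ≤ j), {ω | j ≤ R (n + j) ω} with hB
  have hBmeas : ∀ n, MeasurableSet (B n) := by
    intro n
    exact MeasurableSet.iUnion fun j => MeasurableSet.iUnion fun _ =>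
      hmeasset' (n + j) {x | j ≤ x}
  have hBcompl : ∀ n, (B n)ᶜ = ⋂ k : ℕ, {ω | R (n + (k + 1)) ω < k + 1} := by
    intro n
    ext ω
    simp only [hB, Set.mem_compl_iff, Set.mem_iUnion, Set.mem_setOf_eq, not_exists, not_le,
      Set.mem_iInter]
    constructor
    · intro h k; exact h (k + 1) (Nat.succ_le_succ (Nat.zero_le _))
    · intro h j hj
      obtain ⟨k, rfl⟩ := Nat.exists_eq_add_of_le hj
      simpa [Nat.add_comm] using h k
  -- Step B: P((B (n+1))ᶜ) ≤ f n
  have hDbound : ∀ n : ℕ, P ((B (n + 1))ᶜ) ≤ f n := by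
    intro n
    refine le_tprod_of_le_prod _ (fun k => prob_le_one) _ (fun s => ?_)
    -- intersection over image finset
    set g : ℕ → Set Ω := fun i => {ω | R i ω < i - (n + 1)} with hg
    set T : Finset ℕ := s.image (fun k => (n + 1) + (k + 1)) with hT
    have hinj : Set.InjOn (fun k => (n + 1) + (k + 1)) s := fun a _ b _ h => by dsimp at h; omega
    have hsub : (B (n + 1))ᶜ ⊆ ⋂ i ∈ T, g i := by
      rw [hBcompl]
      intro ω hω
      simp only [Set.mem_iInter] at hω ⊢
      intro i hi
      simp only [hT, Finset.mem_image] at hi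
      obtain ⟨k, _, rfl⟩ := hi
      have := hω k
      simpa [hg, Nat.add_sub_cancel_left] using (by simpa using this : R ((n+1) + (k+1)) ω < k + 1)
    have hprod : P (⋂ i ∈ T, g i) = ∏ i ∈ T, P (g i) := by
      refine hindep.meas_biInter (fun i _ => ?_)
      exact hmeasset i {x | x < i - (n + 1)}
    calc P ((B (n + 1))ᶜ) ≤ P (⋂ i ∈ T, g i) := measure_mono hsub
      _ = ∏ i ∈ T, P (g i) := hprod
      _ = ∏ k ∈ s, P {ω | R ((n + 1) + (k + 1)) ω < k + 1} := by
          rw [hT, Finset.prod_image (fun a ha b hb h => hinj ha hb h)]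
          refine Finset.prod_congr rfl (fun k _ => ?_)
          congr 1
          ext ω
          simp [hg, Nat.add_sub_cancel_left]
      _ = ∏ k ∈ s, P {ω | R ((n + 1) + (k + 1)) ω < k + 1} := rfl
  -- Step C: the tail event has positive probability
  set T' : Set Ω := ⋂ m : ℕ, B (m + N + 1) with hT'
  have hT'meas : MeasurableSet T' := MeasurableSet.iInter fun m => hBmeas _
  have hT'c : P T'ᶜ < 1 := by
    have h1' : T'ᶜ = ⋃ m : ℕ, (B (m + N + 1))ᶜ := by
      rw [hT', Set.compl_iInter]
    calc P T'ᶜ ≤ ∑' m : ℕ, P ((B (m + N + 1))ᶜ) := by rw [h1']; exact measure_iUnion_le _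
      _ ≤ ∑' m : ℕ, f (m + N) := ENNReal.tsum_le_tsum fun m => hDbound (m + N)
      _ < 1 := hN
  have hT'pos : 0 < P T' := by
    rw [pos_iff_ne_zero]
    intro h
    have : P T'ᶜ = 1 := by
      rw [prob_compl_eq_one_sub hT'meas, h, tsub_zero]
    exact absurd this hT'c.ne
  -- Step D: the head event
  set E0 : Set Ω := ⋂ i ∈ Finset.Icc 1 (N + 1), {ω | 1 ≤ R i ω} with hE0
  have hcompl1 : ∀ i, {ω | 1 ≤ R i ω} = {ω | R i ω < 1}ᶜ := by
    intro i; ext ω; simp [Nat.lt_one_iff, Nat.one_le_iff_ne_zero]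
  have hE0pos : 0 < P E0 := by
    have hprod : P E0 = ∏ i ∈ Finset.Icc 1 (N + 1), P {ω | 1 ≤ R i ω} := by
      refine hindep.meas_biInter (fun i _ => ?_)
      exact hmeasset i {x | 1 ≤ x}
    rw [hprod]
    refine CanonicallyOrderedAdd.prod_pos.mpr (fun i _ => ?_)
    rw [hcompl1 i, prob_compl_eq_one_sub (show MeasurableSet {ω | R i ω < 1} from hmeasset' i {x | x < 1})]
    exact tsub_pos_iff_lt.mpr (h1 i)
  -- Step E: independence of E0 and T'
  set ms : ℕ → MeasurableSpace Ω := fun i => MeasurableSpace.comap (R i) ⊤ with hms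
  have hind : Indep (⨆ i ∈ Set.Iic (N + 1), ms i) (⨆ i ∈ (Set.Iic (N + 1))ᶜ, ms i) P :=
    indep_biSup_compl (fun i => (hmeas i).comap_le) hindep.iIndep _
  have hE0m : MeasurableSet[⨆ i ∈ Set.Iic (N + 1), ms i] E0 := by
    refine Finset.measurableSet_biInter _ (fun i hi => ?_)
    have hile : i ∈ Set.Iic (N + 1) := by
      simp only [Finset.mem_Icc] at hi; exact Set.mem_Iic.mpr hi.2
    exact (le_iSup₂ (f := fun i (_ : i ∈ Set.Iic (N + 1)) => ms i) i hile) _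
      (hmeasset i {x | 1 ≤ x})
  have hT'm : MeasurableSet[⨆ i ∈ (Set.Iic (N + 1))ᶜ, ms i] T' := by
    refine MeasurableSet.iInter fun m => ?_
    refine MeasurableSet.iUnion fun j => ?_
    refine MeasurableSet.iUnion fun hj => ?_
    have hmem : (m + N + 1 + j) ∈ (Set.Iic (N + 1))ᶜ := by
      simp only [Set.mem_compl_iff, Set.mem_Iic, not_le]; omega
    exact (le_iSup₂ (f := fun i (_ : i ∈ (Set.Iic (N + 1))ᶜ) => ms i) _ hmem) _
      (hmeasset (m + N + 1 + j) {x | j ≤ x})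
  have hmul : P (E0 ∩ T') = P E0 * P T' :=
    (Indep_iff _ _ _).1 hind _ _ hE0m hT'm
  -- Step F: E0 ∩ T' ⊆ S
  have hsub : E0 ∩ T' ⊆ S := by
    rintro ω ⟨hωE, hωT⟩
    rw [hS]
    simp only [Set.mem_iInter]
    intro n
    rcases le_or_gt n N with hn | hn
    · have hmem : n + 1 ∈ Finset.Icc 1 (N + 1) := by simp; omega
      have := Set.mem_iInter₂.1 hωE (n + 1) hmem
      exact Set.mem_iUnion₂.2 ⟨1, le_refl 1, this⟩
    · have hωB := Set.mem_iInter.1 hωT (n - N - 1)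
      have : n - N - 1 + N + 1 = n := by omega
      rwa [this] at hωB
  calc (0:ℝ≥0∞) < P E0 * P T' := ENNReal.mul_pos hE0pos.ne' hT'pos.ne'
    _ = P (E0 ∩ T') := hmul.symm
    _ ≤ P S := measure_mono hsub
end

section
/- For the heterogeneous Reverse Firework Process, P(S) ≥ ∏_{n=0}^{∞} [ 1 − ∏_{j=1}^{∞} (1 − P(R_{n+j} ≥ j)) ]. -/
open MeasureTheory ProbabilityTheory Filter
open scoped ENNReal

namespace RFW

open Set

lemma prod_anti {f : ℕ → ℝ≥0∞} (hf : ∀ i, f i ≤ 1) :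
    Antitone (fun s : Finset ℕ => ∏ i ∈ s, f i) := by
  intro s t hst
  simp only
  rw [← Finset.prod_sdiff hst]
  exact mul_le_of_le_one_left' (Finset.prod_le_one (fun i _ => zero_le) (fun i _ => hf i))

lemma hasProd_iInf {f : ℕ → ℝ≥0∞} (hf : ∀ i, f i ≤ 1) :
    HasProd f (⨅ s : Finset ℕ, ∏ i ∈ s, f i) :=
  tendsto_atTop_iInf (prod_anti hf)

lemma tprod_eq_iInf {f : ℕ → ℝ≥0∞} (hf : ∀ i, f i ≤ 1) :
    ∏' i, f i = ⨅ s : Finset ℕ, ∏ i ∈ s, f i :=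
  (hasProd_iInf hf).tprod_eq

lemma tprod_le_prod_range {f : ℕ → ℝ≥0∞} (hf : ∀ i, f i ≤ 1) (K : ℕ) :
    ∏' i, f i ≤ ∏ i ∈ Finset.range K, f i := by
  rw [tprod_eq_iInf hf]; exact iInf_le _ _

lemma tprod_eq_iInf_range {f : ℕ → ℝ≥0∞} (hf : ∀ i, f i ≤ 1) :
    ∏' i, f i = ⨅ K : ℕ, ∏ i ∈ Finset.range K, f i := by
  rw [tprod_eq_iInf hf]
  apply le_antisymm
  · exact le_iInf fun K => iInf_le _ _
  · refine le_iInf fun s => ?_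
    obtain ⟨K, hK⟩ := s.exists_nat_subset_range
    exact (iInf_le _ K).trans (prod_anti hf hK)

lemma iSup_mul_iSup_mono {a b : ℕ → ℝ≥0∞} (ha : Monotone a) (hb : Monotone b) :
    (⨆ K, a K) * (⨆ K, b K) = ⨆ K, a K * b K := by
  apply le_antisymm
  · rw [ENNReal.iSup_mul]
    refine iSup_le fun i => ?_
    rw [ENNReal.mul_iSup]
    refine iSup_le fun j => ?_
    exact le_iSup_of_le (max i j) (mul_le_mul' (ha (le_max_left i j)) (hb (le_max_right i j)))
  · exact iSup_le fun K => mul_le_mul' (le_iSup a K) (le_iSup b K)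

lemma prod_iSup_mono {s : Finset ℕ} {x : ℕ → ℕ → ℝ≥0∞} (hx : ∀ n, Monotone (x n)) :
    ∏ n ∈ s, (⨆ K, x n K) = ⨆ K, ∏ n ∈ s, x n K := by
  classical
  induction s using Finset.induction_on with
  | empty => simp
  | @insert a s hns ih =>
    rw [Finset.prod_insert hns, ih,
      iSup_mul_iSup_mono (hx a) (fun K₁ K₂ h => Finset.prod_le_prod' fun n _ => hx n h)]
    exact iSup_congr fun K => (Finset.prod_insert (f := fun n => x n K) hns).symm

lemma exists_min_chain {α : Type*} (D : ℕ → Set α)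
    (hD : ∀ n n', D n ⊆ D n' ∨ D n' ⊆ D n) (s : Finset ℕ) (hs : s.Nonempty) :
    ∃ n₀ ∈ s, ∀ n ∈ s, D n₀ ⊆ D n := by
  classical
  induction s using Finset.induction_on with
  | empty => simp at hs
  | @insert a s h ih =>
    by_cases hsne : s.Nonempty
    · obtain ⟨n₀, hn₀s, hmin⟩ := ih hsne
      rcases hD a n₀ with h1 | h1
      · refine ⟨a, Finset.mem_insert_self a s, fun n hn => ?_⟩
        rcases Finset.mem_insert.1 hn with rfl | hn
        · exact subset_rfl
        · exact h1.trans (hmin n hn)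
      · refine ⟨n₀, Finset.mem_insert_of_mem hn₀s, fun n hn => ?_⟩
        rcases Finset.mem_insert.1 hn with rfl | hn
        · exact h1
        · exact hmin n hn
    · rw [Finset.not_nonempty_iff_eq_empty] at hsne
      subst hsne
      exact ⟨a, Finset.mem_insert_self a ∅, fun n hn => by
        rcases Finset.mem_insert.1 hn with rfl | hn
        · exact subset_rfl
        · simp at hn⟩

/-- The one-dimensional correlation inequality for a chain of sets. -/
lemma oneDim (μ : ℕ → ℝ≥0∞) (hμ : ∑' x, μ x = 1)
    (p : ℕ → ℝ≥0∞) (hp : ∀ n, p n ≤ 1) (D : ℕ → Set ℕ)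
    (hD : ∀ n n', D n ⊆ D n' ∨ D n' ⊆ D n) (s : Finset ℕ) :
    ∏ n ∈ s, (1 - (∑' x, (D n).indicator μ x) * p n)
      ≤ ∑' x, μ x * ∏ n ∈ s, (1 - (D n).indicator (fun _ => p n) x) := by
  classical
  induction s using Finset.strongInductionOn with
  | _ s ih =>
    rcases Finset.eq_empty_or_nonempty s with rfl | hs
    · simp [hμ]
    obtain ⟨n₀, hn₀s, hmin⟩ := exists_min_chain D hD s hs
    set s' := s.erase n₀ with hs'
    have hss' : s' ⊂ s := Finset.erase_ssubset hn₀s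
    set d : ℕ → ℝ≥0∞ := fun n => ∑' x, (D n).indicator μ x with hd
    have hdle : ∀ n, d n ≤ 1 := by
      intro n
      rw [← hμ]
      exact ENNReal.tsum_le_tsum fun x => Set.indicator_le_self _ _ x
    set α : ℝ≥0∞ := ∏ n ∈ s', (1 - p n) with hα
    have hα1 : α ≤ 1 := Finset.prod_le_one (fun _ _ => zero_le) (fun _ _ => tsub_le_self)
    -- pointwise identity
    have hpt : ∀ x, μ x * ∏ n ∈ s, (1 - (D n).indicator (fun _ => p n) x)
        + (D n₀).indicator μ x * (p n₀ * α)
        = μ x * ∏ n ∈ s', (1 - (D n).indicator (fun _ => p n) x) := by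
      intro x
      by_cases hx : x ∈ D n₀
      · have hall : ∀ n ∈ s, (1 - (D n).indicator (fun _ => p n) x) = 1 - p n := by
          intro n hn
          rw [Set.indicator_of_mem (hmin n hn hx)]
        have h1 : ∏ n ∈ s, (1 - (D n).indicator (fun _ => p n) x) = (1 - p n₀) * α := by
          rw [Finset.prod_congr rfl hall, ← Finset.mul_prod_erase s _ hn₀s, ← hs', hα]
        have h2 : ∏ n ∈ s', (1 - (D n).indicator (fun _ => p n) x) = α := by
          rw [hα]
          exact Finset.prod_congr rfl fun n hn => hall n (Finset.mem_of_mem_erase hn)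
        rw [h1, h2, Set.indicator_of_mem hx, ← mul_add, ← add_mul,
          tsub_add_cancel_of_le (hp n₀), one_mul]
      · have h1 : ∏ n ∈ s, (1 - (D n).indicator (fun _ => p n) x)
            = ∏ n ∈ s', (1 - (D n).indicator (fun _ => p n) x) := by
          rw [← Finset.mul_prod_erase s _ hn₀s, Set.indicator_of_notMem hx, tsub_zero, one_mul,
            ← hs']
        rw [h1, Set.indicator_of_notMem hx, zero_mul, add_zero]
    have hsum : (∑' x, μ x * ∏ n ∈ s, (1 - (D n).indicator (fun _ => p n) x))
        + d n₀ * (p n₀ * α)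
        = ∑' x, μ x * ∏ n ∈ s', (1 - (D n).indicator (fun _ => p n) x) := by
      rw [← ENNReal.tsum_mul_right, ← ENNReal.tsum_add]
      exact tsum_congr hpt
    have hIH := ih s' hss'
    have hd₀p₀ : d n₀ * p n₀ ≤ 1 := mul_le_one' (hdle n₀) (hp n₀)
    have hR' : ∏ n ∈ s', (1 - d n * p n)
        = (1 - d n₀ * p n₀) * ∏ n ∈ s', (1 - d n * p n)
          + (d n₀ * p n₀) * ∏ n ∈ s', (1 - d n * p n) := by
      rw [← add_mul, tsub_add_cancel_of_le hd₀p₀, one_mul]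
    have hαR' : α ≤ ∏ n ∈ s', (1 - d n * p n) := by
      refine Finset.prod_le_prod' fun n _ => tsub_le_tsub_left ?_ 1
      calc d n * p n ≤ 1 * p n := mul_le_mul_left (hdle n) _
        _ = p n := one_mul _
    have hfin : d n₀ * (p n₀ * α) ≠ ∞ := by
      refine (lt_of_le_of_lt ?_ ENNReal.one_lt_top).ne
      calc d n₀ * (p n₀ * α) ≤ 1 * (1 * 1) :=
            mul_le_mul' (hdle n₀) (mul_le_mul' (hp n₀) hα1)
        _ = 1 := by ring
    rw [← ENNReal.add_le_add_iff_right hfin, hsum, ← Finset.mul_prod_erase s _ hn₀s, ← hs']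
    calc (1 - d n₀ * p n₀) * ∏ n ∈ s', (1 - d n * p n) + d n₀ * (p n₀ * α)
        ≤ (1 - d n₀ * p n₀) * ∏ n ∈ s', (1 - d n * p n)
          + (d n₀ * p n₀) * ∏ n ∈ s', (1 - d n * p n) := by
          refine add_le_add_right ?_ _
          rw [← mul_assoc]
          exact mul_le_mul' le_rfl hαR'
      _ = ∏ n ∈ s', (1 - d n * p n) := hR'.symm
      _ ≤ _ := hIH

variable {Ω : Type*} [MeasurableSpace Ω] {P : Measure Ω} [IsProbabilityMeasure P]
  {R : ℕ → Ω → ℕ}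

/-- The "box" event: coordinates `m < M` constrained below thresholds `t n m`. -/
def box (R : ℕ → Ω → ℕ) (t : ℕ → ℕ → ℕ∞) (n M : ℕ) : Set Ω :=
  ⋂ m ∈ Finset.range M, R m ⁻¹' {x : ℕ | (x : ℕ∞) < t n m}

lemma box_meas (hmeas : ∀ i, Measurable (R i)) (t : ℕ → ℕ → ℕ∞) (n M : ℕ) :
    MeasurableSet (box R t n M) :=
  MeasurableSet.biInter (Finset.range M).countable_toSet
    fun m _ => (hmeas m) .of_discrete

/-- Core correlation inequality for complements of boxes. -/
lemma core (hmeas : ∀ i, Measurable (R i))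
    (hindep : iIndepFun R P) (t : ℕ → ℕ → ℕ∞) :
    ∀ M (s : Finset ℕ),
      ∏ n ∈ s, (1 - P (box R t n M)) ≤ P (⋂ n ∈ s, (box R t n M)ᶜ) := by
  classical
  intro M
  induction M with
  | zero =>
    intro s
    have hbox : ∀ n, box R t n 0 = univ := by
      intro n; simp [box]
    rcases Finset.eq_empty_or_nonempty s with rfl | ⟨n, hn⟩
    · simp
    · rw [Finset.prod_eq_zero hn (by rw [hbox n, measure_univ, tsub_self])]
      exact zero_le
  | succ M ihM =>
    intro s
    set D : ℕ → Set ℕ := fun n => {x : ℕ | (x : ℕ∞) < t n M} with hDdef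
    have hDchain : ∀ n n', D n ⊆ D n' ∨ D n' ⊆ D n := by
      intro n n'
      rcases le_total (t n M) (t n' M) with h | h
      · exact Or.inl fun x hx => lt_of_lt_of_le hx h
      · exact Or.inr fun x hx => lt_of_lt_of_le hx h
    set μ : ℕ → ℝ≥0∞ := fun x => P (R M ⁻¹' {x}) with hμdef
    have hdisj : ∀ (B : ℕ → Set ℕ), Pairwise (Function.onFun Disjoint B) →
        Pairwise (Function.onFun Disjoint fun x => R M ⁻¹' B x) :=
      fun B hB i j hij => (hB hij).preimage _
    have hsingdisj : Pairwise (Function.onFun Disjoint fun x : ℕ => R M ⁻¹' {x}) :=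
      hdisj _ fun i j hij => Set.disjoint_singleton.2 hij
    have huniv : ⋃ x : ℕ, R M ⁻¹' {x} = univ := by
      ext ω; simp
    have hμ : ∑' x, μ x = 1 := by
      calc ∑' x, μ x = P (⋃ x : ℕ, R M ⁻¹' {x}) :=
            (measure_iUnion hsingdisj fun x => (hmeas M) .of_discrete).symm
        _ = 1 := by rw [huniv, measure_univ]
    -- split of the box
    have hsplit : ∀ n, box R t n (M + 1) = box R t n M ∩ R M ⁻¹' D n := by
      intro n
      rw [box, Finset.range_add_one, Finset.set_biInter_insert, Set.inter_comm]
      rfl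
    -- grouping independence
    set F : Ω → (↥(Finset.range M) → ℕ) := fun ω i => R i ω with hFdef
    have hFR : IndepFun F (R M) P := by
      have h := hindep.indepFun_finset (Finset.range M) {M}
        (by simp [Finset.disjoint_singleton_right]) hmeas
      exact h.comp measurable_id (measurable_pi_apply (⟨M, Finset.mem_singleton_self M⟩ :
        ({M} : Finset ℕ)))
    set A : ℕ → Set (↥(Finset.range M) → ℕ) :=
      fun n => ⋂ i : ↥(Finset.range M), {v | ((v i : ℕ) : ℕ∞) < t n i} with hAdef
    have hApre : ∀ n, box R t n M = F ⁻¹' A n := by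
      intro n
      ext ω
      simp only [box, hAdef, Set.mem_iInter, Set.mem_preimage, Set.mem_setOf_eq,
        Finset.mem_range, hFdef]
      constructor
      · intro h i
        exact h i.1 (Finset.mem_range.1 i.2)
      · intro h m hm
        exact h ⟨m, Finset.mem_range.2 hm⟩
    have hAmeas : ∀ n, MeasurableSet (A n) :=
      fun n => MeasurableSet.iInter fun i =>
        show MeasurableSet ((fun v : ↥(Finset.range M) → ℕ => v i) ⁻¹'
            {y : ℕ | (y : ℕ∞) < t n ↑i}) from
          measurable_pi_apply i .of_discrete
    have hgroup : ∀ (T : Finset ℕ) (B : Set ℕ),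
        P ((⋂ n ∈ T, (box R t n M)ᶜ) ∩ R M ⁻¹' B)
          = P (⋂ n ∈ T, (box R t n M)ᶜ) * P (R M ⁻¹' B) := by
      intro T B
      have h2 : (⋂ n ∈ T, (box R t n M)ᶜ) = F ⁻¹' (⋂ n ∈ T, (A n)ᶜ) := by
        simp_rw [Set.preimage_iInter, Set.preimage_compl]
        exact Set.iInter₂_congr fun n _ => by rw [hApre n]
      rw [h2]
      exact hFR.measure_inter_preimage_eq_mul _ _
        (MeasurableSet.biInter T.countable_toSet fun n _ => (hAmeas n).compl) .of_discrete
    have hgroup2 : ∀ n, P (box R t n M ∩ R M ⁻¹' D n)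
        = P (box R t n M) * P (R M ⁻¹' D n) := by
      intro n
      rw [hApre n]
      exact hFR.measure_inter_preimage_eq_mul _ _ (hAmeas n) .of_discrete
    -- partition over the value of R M
    have hpart : P (⋂ n ∈ s, (box R t n (M + 1))ᶜ)
        = ∑' x, P (⋂ n ∈ s.filter (fun n => x ∈ D n), (box R t n M)ᶜ) * μ x := by
      have hcover : (⋂ n ∈ s, (box R t n (M + 1))ᶜ)
          = ⋃ x : ℕ, ((⋂ n ∈ s.filter (fun n => x ∈ D n), (box R t n M)ᶜ) ∩ R M ⁻¹' {x}) := by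
        ext ω
        simp only [Set.mem_iInter, Set.mem_iUnion, Set.mem_inter_iff, Set.mem_compl_iff,
          Set.mem_preimage, Set.mem_singleton_iff, Finset.mem_filter, hsplit]
        constructor
        · intro h
          refine ⟨R M ω, fun n hn => ?_, rfl⟩
          intro hbox
          exact h n hn.1 ⟨hbox, hn.2⟩
        · rintro ⟨x, hx, rfl⟩ n hn ⟨hb, hd⟩
          exact hx n ⟨hn, hd⟩ hb
      rw [hcover, measure_iUnion ?_ ?_]
      · exact tsum_congr fun x => hgroup _ _
      · intro i j hij
        exact Set.disjoint_left.2 fun ω ⟨_, hi⟩ ⟨_, hj⟩ => hij (hi.symm.trans hj)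
      · intro x
        exact ((MeasurableSet.biInter (Finset.countable_toSet _)
          fun n _ => (box_meas hmeas t n M).compl)).inter ((hmeas M) .of_discrete)
    -- identification of the indicator sums
    have hd : ∀ n, (∑' x, (D n).indicator μ x) = P (R M ⁻¹' D n) := by
      intro n
      have h1 : ∀ x, (D n).indicator μ x = P (R M ⁻¹' ({x} ∩ D n)) := by
        intro x
        by_cases hx : x ∈ D n
        · rw [Set.indicator_of_mem hx,
            Set.inter_eq_self_of_subset_left (Set.singleton_subset_iff.2 hx)]
        · rw [Set.indicator_of_notMem hx, Set.singleton_inter_eq_empty.2 hx]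
          simp
      simp_rw [h1]
      rw [← measure_iUnion ?_ ?_]
      · congr 1
        rw [← Set.preimage_iUnion, ← Set.iUnion_inter, Set.iUnion_singleton_eq_range,
          Set.range_id', Set.univ_inter]
      · refine hdisj _ fun i j hij => Set.disjoint_left.2 fun y hy1 hy2 => hij ?_
        rw [← Set.mem_singleton_iff.1 hy1.1, ← Set.mem_singleton_iff.1 hy2.1]
      · exact fun x => (hmeas M) .of_discrete
    -- put everything together
    calc ∏ n ∈ s, (1 - P (box R t n (M + 1)))
        = ∏ n ∈ s, (1 - (∑' x, (D n).indicator μ x) * P (box R t n M)) := by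
          refine Finset.prod_congr rfl fun n _ => ?_
          rw [hsplit n, hgroup2 n, hd n, mul_comm]
      _ ≤ ∑' x, μ x * ∏ n ∈ s, (1 - (D n).indicator (fun _ => P (box R t n M)) x) :=
          oneDim μ hμ _ (fun n => prob_le_one) D hDchain s
      _ ≤ ∑' x, P (⋂ n ∈ s.filter (fun n => x ∈ D n), (box R t n M)ᶜ) * μ x := by
          refine ENNReal.tsum_le_tsum fun x => ?_
          rw [mul_comm]
          refine mul_le_mul' ?_ le_rfl
          refine le_trans ?_ (ihM (s.filter (fun n => x ∈ D n)))
          rw [Finset.prod_filter]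
          refine le_of_eq (Finset.prod_congr rfl fun n _ => ?_)
          by_cases hx : x ∈ D n
          · rw [if_pos hx, Set.indicator_of_mem hx]
          · rw [if_neg hx, Set.indicator_of_notMem hx, tsub_zero]
      _ = P (⋂ n ∈ s, (box R t n (M + 1))ᶜ) := hpart.symm

end RFW

open RFW

/-- **Heterogeneous Reverse Firework Process.**
`P(S) ≥ ∏_{n=0}^∞ [1 − ∏_{j=1}^∞ (1 − P(R_{n+j} ≥ j))]`. -/
theorem reverse_firework_heterogeneous_lower_bound
    {Ω : Type*} [MeasurableSpace Ω] (P : Measure Ω) [IsProbabilityMeasure P]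
    (R : ℕ → Ω → ℕ)
    (hmeas : ∀ i, Measurable (R i))
    (hindep : iIndepFun R P)
    (h0 : ∀ n, 0 < P {ω | R n ω < 1}) (h1 : ∀ n, P {ω | R n ω < 1} < 1)
    (S : Set Ω)
    (hS : S = ⋂ (n : ℕ), ⋃ (j : ℕ) (_ : 1 ≤ j), {ω | j ≤ R (n + j) ω}) :
    P S ≥ ∏' n : ℕ, (1 - ∏' j : ℕ, (1 - P {ω | j + 1 ≤ R (n + (j + 1)) ω})) := by
  classical
  rw [ge_iff_le]
  set f : ℕ → ℕ → ℝ≥0∞ := fun n j => P {ω | R (n + (j + 1)) ω < j + 1} with hfdef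
  have hfle : ∀ n j, f n j ≤ 1 := fun n j => prob_le_one
  have hcompl : ∀ n j, (1 : ℝ≥0∞) - P {ω | j + 1 ≤ R (n + (j + 1)) ω} = f n j := by
    intro n j
    have hset : {ω | R (n + (j + 1)) ω < j + 1} = {ω | j + 1 ≤ R (n + (j + 1)) ω}ᶜ := by
      ext ω
      simp [Nat.not_le]
    rw [hfdef]
    simp only
    rw [hset, prob_compl_eq_one_sub]
    exact show MeasurableSet (R (n + (j + 1)) ⁻¹' {x : ℕ | j + 1 ≤ x}) from
      (hmeas _) .of_discrete
  have hgoal : (∏' n : ℕ, (1 - ∏' j : ℕ, (1 - P {ω | j + 1 ≤ R (n + (j + 1)) ω})))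
      = ∏' n : ℕ, (1 - ∏' j : ℕ, f n j) :=
    tprod_congr fun n => by rw [tprod_congr fun j => hcompl n j]
  rw [hgoal]
  set Q : ℕ → ℝ≥0∞ := fun n => ∏' j, f n j with hQdef
  set A : ℕ → Set Ω := fun n => ⋃ (j : ℕ) (_ : 1 ≤ j), {ω | j ≤ R (n + j) ω} with hAdef
  have hAm : ∀ n, MeasurableSet (A n) := by
    intro n
    refine MeasurableSet.iUnion fun j => MeasurableSet.iUnion fun _ => ?_
    exact show MeasurableSet (R (n + j) ⁻¹' {x : ℕ | j ≤ x}) from (hmeas _) .of_discrete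
  -- key finite bound
  have hkey : ∀ N K : ℕ, ∏ n ∈ Finset.range N, (1 - ∏ j ∈ Finset.range K, f n j)
      ≤ P (⋂ n ∈ Finset.range N, A n) := by
    intro N K
    set t : ℕ → ℕ → ℕ∞ := fun n m => if n < m ∧ m ≤ n + K then ((m - n : ℕ) : ℕ∞) else ⊤
      with htdef
    have hboxeq : ∀ n, n < N → box R t n (N + K) =
        ⋂ m ∈ (Finset.range K).image (fun j => n + (j + 1)), R m ⁻¹' {x : ℕ | x < m - n} := by
      intro n hnN
      ext ω
      simp only [box, Set.mem_iInter, Set.mem_preimage, Set.mem_setOf_eq, Finset.mem_range,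
        Finset.mem_image, htdef]
      constructor
      · rintro h m ⟨j, hj, rfl⟩
        have hm := h (n + (j + 1)) (by omega)
        rw [if_pos (by omega)] at hm
        exact Nat.cast_lt.1 hm
      · intro h m hm
        split_ifs with hcond
        · exact Nat.cast_lt.2 (h m ⟨m - n - 1, by omega, by omega⟩)
        · exact ENat.coe_lt_top _
    have hboxP : ∀ n, n < N → P (box R t n (N + K)) = ∏ j ∈ Finset.range K, f n j := by
      intro n hnN
      rw [hboxeq n hnN,
        hindep.measure_inter_preimage_eq_mul (sets := fun m => {x : ℕ | x < m - n}) _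
          (fun i _ => .of_discrete),
        Finset.prod_image (by intro a _ b _ h; simp only at h; omega)]
      refine Finset.prod_congr rfl fun j _ => ?_
      have : {x : ℕ | x < n + (j + 1) - n} = {x : ℕ | x < j + 1} := by
        ext x; simp only [Set.mem_setOf_eq]; omega
      rw [this, hfdef]
      rfl
    have hsub : (⋂ n ∈ Finset.range N, (box R t n (N + K))ᶜ)
        ⊆ ⋂ n ∈ Finset.range N, A n := by
      refine Set.iInter₂_mono fun n hn => ?_
      intro ω hω
      rw [Set.mem_compl_iff, hboxeq n (Finset.mem_range.1 hn)] at hω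
      simp only [Set.mem_iInter, Set.mem_preimage, Set.mem_setOf_eq, Finset.mem_image,
        Finset.mem_range, not_forall] at hω
      obtain ⟨m, ⟨j, hj, rfl⟩, hge⟩ := hω
      rw [hAdef]
      refine Set.mem_iUnion.2 ⟨j + 1, Set.mem_iUnion.2 ⟨by omega, ?_⟩⟩
      show j + 1 ≤ R (n + (j + 1)) ω
      omega
    calc ∏ n ∈ Finset.range N, (1 - ∏ j ∈ Finset.range K, f n j)
        = ∏ n ∈ Finset.range N, (1 - P (box R t n (N + K))) :=
          Finset.prod_congr rfl fun n hn => by rw [hboxP n (Finset.mem_range.1 hn)]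
      _ ≤ P (⋂ n ∈ Finset.range N, (box R t n (N + K))ᶜ) :=
          core hmeas hindep t (N + K) (Finset.range N)
      _ ≤ P (⋂ n ∈ Finset.range N, A n) := measure_mono hsub
  -- continuity from above
  have hS2 : S = ⋂ N : ℕ, ⋂ n ∈ Finset.range N, A n := by
    rw [hS]
    ext ω
    simp only [Set.mem_iInter, Finset.mem_range, hAdef]
    exact ⟨fun h N n _ => h n, fun h n => h (n + 1) n (Nat.lt_succ_self n)⟩
  have hPS : P S = ⨅ N : ℕ, P (⋂ n ∈ Finset.range N, A n) := by
    rw [hS2]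
    refine Directed.measure_iInter (fun N => ?_) ?_ ⟨0, measure_ne_top P _⟩
    · exact (MeasurableSet.biInter (Finset.range N).countable_toSet
        fun n _ => hAm n).nullMeasurableSet
    · intro i j
      refine ⟨max i j, ?_, ?_⟩ <;>
        exact Set.biInter_subset_biInter_left
          (fun n hn => Finset.mem_range.2 (lt_of_lt_of_le (Finset.mem_range.1 hn) (by omega)))
  rw [hPS]
  refine le_iInf fun N => ?_
  refine (tprod_le_prod_range (fun n => tsub_le_self) N).trans ?_
  have hQ : ∀ n, (1 : ℝ≥0∞) - Q n = ⨆ K, (1 - ∏ j ∈ Finset.range K, f n j) := by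
    intro n
    rw [hQdef]
    simp only
    rw [tprod_eq_iInf_range (hfle n), ENNReal.sub_iInf]
  calc ∏ n ∈ Finset.range N, (1 - Q n)
      = ⨆ K, ∏ n ∈ Finset.range N, (1 - ∏ j ∈ Finset.range K, f n j) := by
        rw [Finset.prod_congr rfl fun n _ => hQ n]
        exact prod_iSup_mono fun n K₁ K₂ h =>
          tsub_le_tsub_left (prod_anti (hfle n) (Finset.range_subset_range.2 h)) 1
    _ ≤ P (⋂ n ∈ Finset.range N, A n) := iSup_le fun K => hkey N K
end

section
/- Let (b_n)_{n∈ℕ} be a non-increasing sequence of reals with 0 < b_n, b_0 < 1, b_n → 0, ∑_{n=0}^{∞} b_n = ∞ and n·b_n → 0 as n → ∞. Consider the heterogeneous Firework Process with positions u_i = i in which the independent ℕ-valued radii (R_n) have distributions P(R_n = 0) = 1 − b_n and P(R_n = k) = b_{n+k−1} − b_{n+k} for k ≥ 1. Then every R_n has infinite expectation (∑_{j=1}^{∞} P(R_n ≥ j) = ∞ for all n), and yet P(V) = 0. -/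
open MeasureTheory ProbabilityTheory Filter
open scoped ENNReal

/-- **Example (heterogeneous Firework Process).** With `P(R_n = 0) = 1 - b_n` and
`P(R_n = k) = b_{n+k-1} - b_{n+k}` for `k ≥ 1`, where `(b_n)` is non-increasing,
`0 < b_n`, `b_0 < 1`, `b_n → 0`, `∑ b_n = ∞` and `n·b_n → 0`, every `R_n` has
infinite expectation and yet `P(V) = 0`. -/
theorem firework_heterogeneous_example_infinite_expectation_death
    {Ω : Type*} [MeasurableSpace Ω] (P : Measure Ω) [IsProbabilityMeasure P]
    (b : ℕ → ℝ) (hbmono : Antitone b) (hbpos : ∀ n, 0 < b n) (hb0 : b 0 < 1)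
    (hblim : Tendsto b atTop (nhds 0))
    (hbsum : ¬ Summable b)
    (hbn : Tendsto (fun n : ℕ => (n : ℝ) * b n) atTop (nhds 0))
    (R : ℕ → Ω → ℕ)
    (hmeas : ∀ i, Measurable (R i))
    (hindep : iIndepFun R P)
    (hd0 : ∀ n, (P {ω | R n ω = 0}).toReal = 1 - b n)
    (hdk : ∀ n k : ℕ, (P {ω | R n ω = k + 1}).toReal = b (n + k) - b (n + k + 1))
    (V : Set Ω)
    (hV : V = ⋂ (n : ℕ) (_ : 1 ≤ n), ⋃ i ∈ Finset.range n,
      {ω | n - i ≤ R i ω}) :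
    (∀ n : ℕ, (∑' j : ℕ, P {ω | j + 1 ≤ R n ω}) = ⊤) ∧ P V = 0 := by
  have hfin : ∀ s : Set Ω, P s ≠ ⊤ := fun s => (measure_lt_top P s).ne
  have hmeq : ∀ n j : ℕ, MeasurableSet {ω | R n ω = j} := fun n j =>
    hmeas n (measurableSet_singleton j)
  -- key computation
  have key : ∀ n j : ℕ, (P {ω | j + 1 ≤ R n ω}).toReal = b (n + j) := by
    intro n j
    induction j with
    | zero =>
      have hset : {ω | 0 + 1 ≤ R n ω} = {ω | R n ω = 0}ᶜ := by
        ext ω; simp [Nat.one_le_iff_ne_zero]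
      rw [hset, measure_compl (hmeq n 0) (hfin _),
        ENNReal.toReal_sub_of_le (measure_mono (Set.subset_univ _)) (hfin _)]
      simp [hd0 n]
    | succ j ih =>
      have hsub : {ω | R n ω = j + 1} ⊆ {ω | j + 1 ≤ R n ω} := by
        intro ω h; simp only [Set.mem_setOf_eq] at *; omega
      have hset : {ω | j + 1 + 1 ≤ R n ω}
          = {ω | j + 1 ≤ R n ω} \ {ω | R n ω = j + 1} := by
        ext ω; simp only [Set.mem_setOf_eq, Set.mem_diff]; omega
      rw [hset, measure_diff hsub (hmeq n (j+1)).nullMeasurableSet (hfin _),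
        ENNReal.toReal_sub_of_le (measure_mono hsub) (hfin _), ih, hdk n j]
      ring_nf
  constructor
  · intro n
    by_contra h
    have hs : Summable fun j => (P {ω | j + 1 ≤ R n ω}).toReal :=
      ENNReal.summable_toReal h
    have hs2 : Summable fun j => b (n + j) := by
      simpa only [key n] using hs
    have hs3 : Summable fun j => b (j + n) := by
      simpa [add_comm] using hs2
    exact hbsum ((summable_nat_add_iff n).mp hs3)
  · -- union bound
    have hbound : ∀ n : ℕ, 1 ≤ n → (P V).toReal ≤ (n : ℝ) * b (n - 1) := by
      intro n hn
      have hVsub : V ⊆ ⋃ i ∈ Finset.range n, {ω | n - i ≤ R i ω} := by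
        rw [hV]
        exact Set.iInter₂_subset n hn
      have h1 : P V ≤ ∑ i ∈ Finset.range n, P {ω | n - i ≤ R i ω} :=
        le_trans (measure_mono hVsub) (measure_biUnion_finset_le _ _)
      have h2 : (P V).toReal ≤ (∑ i ∈ Finset.range n, P {ω | n - i ≤ R i ω}).toReal := by
        refine ENNReal.toReal_mono ?_ h1
        exact (ENNReal.sum_lt_top.2 fun i _ => measure_lt_top P _).ne
      rw [ENNReal.toReal_sum (fun i _ => hfin _)] at h2
      have h3 : ∀ i ∈ Finset.range n, (P {ω | n - i ≤ R i ω}).toReal = b (n - 1) := by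
        intro i hi
        have hi' : i < n := Finset.mem_range.mp hi
        have : n - i = (n - 1 - i) + 1 := by omega
        rw [this, key i (n - 1 - i)]
        congr 1; omega
      rw [Finset.sum_congr rfl h3, Finset.sum_const, Finset.card_range,
        nsmul_eq_mul] at h2
      exact h2
    have hf : Tendsto (fun m : ℕ => ((m : ℝ) + 1) * b m) atTop (nhds 0) := by
      have := hbn.add hblim
      simpa [add_mul, one_mul] using this
    have hg : Tendsto (fun n : ℕ => (n : ℝ) * b (n - 1)) atTop (nhds 0) := by
      have hcomp : Tendsto (fun n : ℕ => (((n - 1 : ℕ) : ℝ) + 1) * b (n - 1))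
          atTop (nhds 0) := hf.comp (tendsto_sub_atTop_nat 1)
      refine hcomp.congr' ?_
      filter_upwards [eventually_ge_atTop 1] with n hn
      have : ((n - 1 : ℕ) : ℝ) + 1 = (n : ℝ) := by
        rw [Nat.cast_sub hn]; push_cast; ring
      rw [this]
    have hle : (P V).toReal ≤ 0 := by
      refine ge_of_tendsto hg ?_
      filter_upwards [eventually_ge_atTop 1] with n hn
      exact hbound n hn
    have : (P V).toReal = 0 := le_antisymm hle ENNReal.toReal_nonneg
    rcases (ENNReal.toReal_eq_zero_iff _).mp this with h | h
    · exact h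
    · exact absurd h (hfin V)
end
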